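/- arXiv:2509.17515 — 6 statements merged into one kernel-verified Lean document; each statement's English description precedes it below -/
import Mathlib

section
/- Let td denote the formal power series over ℚ defined as the multiplicative inverse of the unit power series Σ_{m≥0} (−1)^m X^m/(m+1)! (formally, td(X) = X/(1 − e^{−X}), which has constant term 1). Then for all natural numbers r, p, a with a ≤ p, the coefficient of X^{r+a} in the power series td^{r+1} · exp(X)^p · (td − X)^a equals the binomial coefficient choose(r+p, p−a). (Equivalently, in the paper's notation, [x^r] td(x)^{r+1} e^{px} (td(x)/x − 1)^a = choose(r+p, p−a).) -/
open PowerSeries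

/-- The Todd power series `td(X) = X / (1 - e^{-X})`, defined as the multiplicative
inverse of the unit power series `Σ_{m ≥ 0} (-1)^m X^m / (m+1)!`. -/
noncomputable def tdSeries : PowerSeries ℚ :=
  (PowerSeries.mk fun m => ((-1 : ℚ) ^ m / (m + 1).factorial))⁻¹

noncomputable def uS : PowerSeries ℚ := PowerSeries.mk fun m => ((-1 : ℚ) ^ m / (m + 1).factorial)

noncomputable def En : PowerSeries ℚ := PowerSeries.evalNegHom (PowerSeries.exp ℚ)

lemma constCoeff_uS : constantCoeff (R := ℚ) uS = 1 := by
  simp [uS, ← coeff_zero_eq_constantCoeff]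

lemma td_mul_uS : tdSeries * uS = 1 := by
  rw [tdSeries, show (PowerSeries.mk fun m => ((-1 : ℚ) ^ m / (m + 1).factorial)) = uS from rfl]
  exact PowerSeries.inv_mul_cancel _ (by rw [constCoeff_uS]; norm_num)

lemma constCoeff_td : constantCoeff (R := ℚ) tdSeries = 1 := by
  have := congrArg (constantCoeff (R := ℚ)) td_mul_uS
  rw [map_mul, constCoeff_uS, mul_one, map_one] at this
  exact this

lemma coeff_En (n : ℕ) : coeff (R := ℚ) n En = (-1 : ℚ) ^ n / n.factorial := by
  simp [En, evalNegHom, coeff_rescale, coeff_exp, div_eq_mul_inv]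

lemma X_mul_uS : (X : PowerSeries ℚ) * uS = 1 - En := by
  ext n
  cases n with
  | zero =>
    have h0 : (coeff (R := ℚ) 0) En = 1 := by simp [coeff_En]
    have h1 : (coeff (R := ℚ) 0) ((X : PowerSeries ℚ) * uS) = 0 := by
      simp [coeff_zero_eq_constantCoeff, map_mul]
    rw [h1, map_sub, h0, coeff_one]
    norm_num
  | succ n =>
    rw [coeff_succ_X_mul]
    simp [uS, coeff_En, pow_succ]
    ring

lemma td_mul_sub : tdSeries * (1 - En) = X := by
  rw [← X_mul_uS]
  calc tdSeries * ((X : PowerSeries ℚ) * uS) = X * (tdSeries * uS) := by ring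
  _ = X := by rw [td_mul_uS, mul_one]

lemma td_eq : tdSeries = X + tdSeries * En := by linear_combination td_mul_sub

lemma deriv_En : d⁄dX ℚ En = -En := by
  ext n
  rw [coeff_derivative]
  simp only [coeff_En, map_neg]
  rw [Nat.factorial_succ, pow_succ]
  push_cast
  have h1 : ((n.factorial : ℚ)) ≠ 0 := by exact_mod_cast n.factorial_ne_zero
  have h2 : ((n : ℚ) + 1) ≠ 0 := by positivity
  field_simp

lemma key : tdSeries ^ 2 * En = tdSeries - X * d⁄dX ℚ tdSeries := by
  have h := congrArg (d⁄dX ℚ) td_eq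
  rw [map_add, derivative_X, Derivation.leibniz, deriv_En, smul_eq_mul, smul_eq_mul] at h
  linear_combination tdSeries * h - (d⁄dX ℚ tdSeries) * td_mul_sub

lemma En_td_coeff (n : ℕ) : coeff (R := ℚ) (n + 1) (En * tdSeries ^ (n + 2)) = 0 := by
  have e1 : En * tdSeries ^ (n + 2)
      = tdSeries ^ (n + 1) - X * (tdSeries ^ n * d⁄dX ℚ tdSeries) := by
    linear_combination (tdSeries ^ n) * key
  have e2 : d⁄dX ℚ (tdSeries ^ (n + 1)) = (n + 1) • tdSeries ^ n • d⁄dX ℚ tdSeries := by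
    simpa using Derivation.leibniz_pow (d⁄dX ℚ) (a := tdSeries) (n + 1)
  have e3 : coeff (R := ℚ) n (tdSeries ^ n * d⁄dX ℚ tdSeries)
      = coeff (R := ℚ) (n + 1) (tdSeries ^ (n + 1)) := by
    have h := congrArg (coeff (R := ℚ) n) e2
    rw [coeff_derivative] at h
    simp only [smul_eq_mul, map_nsmul, nsmul_eq_mul] at h
    rw [← map_natCast (C (R := ℚ)) (n + 1), coeff_C_mul] at h
    have h2 : ((n + 1 : ℕ) : ℚ) ≠ 0 := by positivity
    refine mul_left_cancel₀ h2 ?_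
    push_cast at h ⊢
    linear_combination -h
  rw [e1, map_sub, coeff_succ_X_mul, e3, sub_self]

lemma base (n : ℕ) : coeff (R := ℚ) n (tdSeries ^ (n + 1)) = 1 := by
  induction n with
  | zero => simp [coeff_zero_eq_constantCoeff, constCoeff_td]
  | succ n ih =>
    have e : tdSeries ^ (n + 2) = X * tdSeries ^ (n + 1) + En * tdSeries ^ (n + 2) := by
      linear_combination (tdSeries ^ (n + 1)) * td_eq
    rw [show n + 1 + 1 = n + 2 from rfl, e, map_add, coeff_succ_X_mul, ih, En_td_coeff, add_zero]

lemma En_mul_exp : En * exp ℚ = 1 := by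
  rw [mul_comm]; exact exp_mul_exp_neg_eq_one

lemma td_mul_exp : tdSeries * exp ℚ = tdSeries + X * exp ℚ := by
  linear_combination (exp ℚ) * td_mul_sub + tdSeries * En_mul_exp

lemma mainT : ∀ q n : ℕ, coeff (R := ℚ) n (tdSeries ^ (n + 1) * exp ℚ ^ q) = ((n + q).choose q : ℚ) := by
  intro q
  induction q with
  | zero => intro n; simp [base n]
  | succ q ihq =>
    intro n
    induction n with
    | zero =>
      rw [coeff_zero_eq_constantCoeff, map_mul, map_pow, map_pow, constCoeff_td,
        constantCoeff_exp]
      simp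
    | succ n ihn =>
      have e : tdSeries ^ (n + 2) * exp ℚ ^ (q + 1)
          = tdSeries ^ (n + 2) * exp ℚ ^ q + X * (tdSeries ^ (n + 1) * exp ℚ ^ (q + 1)) := by
        linear_combination (tdSeries ^ (n + 1) * exp ℚ ^ q) * td_mul_exp
      rw [show n + 1 + 1 = n + 2 from rfl, e, map_add, coeff_succ_X_mul, ihn]
      have := ihq (n + 1)
      rw [show n + 1 + 1 = n + 2 from rfl] at this
      rw [this]
      rw [show n + 1 + q = n + q + 1 by ring, show n + (q + 1) = n + q + 1 by ring,
        show n + 1 + (q + 1) = (n + q + 1) + 1 by ring, Nat.choose_succ_succ (n + q + 1) q]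
      push_cast
      ring

lemma td_sub_X : tdSeries - X = tdSeries * En := by linear_combination td_mul_sub

theorem coeff_td_pow_exp_pow (r p a : ℕ) (h : a ≤ p) :
    PowerSeries.coeff (R := ℚ) (r + a)
      (tdSeries ^ (r + 1) * (PowerSeries.exp ℚ) ^ p * (tdSeries - PowerSeries.X) ^ a)
      = ((r + p).choose (p - a) : ℚ) := by
  have key : tdSeries ^ (r + 1) * (PowerSeries.exp ℚ) ^ p * (tdSeries - PowerSeries.X) ^ a
      = tdSeries ^ ((r + a) + 1) * (PowerSeries.exp ℚ) ^ (p - a) * (En * exp ℚ) ^ a := by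
    rw [td_sub_X, show (exp ℚ) ^ p = (exp ℚ) ^ (p - a) * (exp ℚ) ^ a from by
      rw [← pow_add, Nat.sub_add_cancel h]]
    ring
  rw [key, En_mul_exp, one_pow, mul_one, mainT (p - a) (r + a),
    show r + a + (p - a) = r + p from by omega]
end

section
/- Let td denote the formal power series over ℚ defined as the multiplicative inverse of the unit power series Σ_{m≥0} (−1)^m X^m/(m+1)! (formally, td(X) = X/(1 − e^{−X})). Then for all natural numbers r, p, a with a > p, the coefficient of X^{r+a} in the power series td^{r+1} · exp(X)^p · (td − X)^a equals 0. (This is the vanishing case of the convention that choose(r+p, p−a) is zero when the lower entry is negative.) -/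
open PowerSeries

noncomputable def Sser : PowerSeries ℚ :=
  PowerSeries.mk fun m => ((-1 : ℚ) ^ m / (m + 1).factorial)

noncomputable def Eser : PowerSeries ℚ :=
  PowerSeries.mk fun m => ((-1 : ℚ) ^ m / m.factorial)

lemma Sser_const : PowerSeries.constantCoeff Sser ≠ 0 := by
  have : PowerSeries.constantCoeff Sser = 1 := by
    rw [← PowerSeries.coeff_zero_eq_constantCoeff_apply]
    simp [Sser]
  rw [this]; norm_num

lemma td_mul_S : tdSeries * Sser = 1 :=
  PowerSeries.inv_mul_cancel Sser Sser_const

lemma S_mul_td : Sser * tdSeries = 1 := by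
  rw [mul_comm]; exact td_mul_S

lemma Eser_eq_evalNeg : Eser = PowerSeries.evalNegHom (PowerSeries.exp ℚ) := by
  ext n
  rw [Eser, PowerSeries.coeff_mk, PowerSeries.evalNegHom, PowerSeries.coeff_rescale,
    PowerSeries.coeff_exp]
  simp [div_eq_mul_inv, mul_comm]

lemma exp_mul_E : PowerSeries.exp ℚ * Eser = 1 := by
  rw [Eser_eq_evalNeg]; exact PowerSeries.exp_mul_exp_neg_eq_one

lemma Eser_eq_one_sub : Eser = 1 - PowerSeries.X * Sser := by
  ext n
  cases n with
  | zero => simp [Eser, Sser]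
  | succ n =>
    rw [map_sub, PowerSeries.coeff_succ_X_mul]
    simp [Eser, Sser, pow_succ]
    ring

lemma Eser_eq_deriv : Eser = Sser + PowerSeries.X * (d⁄dX ℚ Sser) := by
  ext n
  cases n with
  | zero => simp [Eser, Sser]
  | succ n =>
    rw [map_add, PowerSeries.coeff_succ_X_mul, PowerSeries.coeff_derivative]
    simp only [Eser, Sser, PowerSeries.coeff_mk]
    rw [Nat.factorial_succ (n+1)]
    have h1 : ((n+1+1 : ℕ) : ℚ) ≠ 0 := by positivity
    have h2 : ((n+1).factorial : ℚ) ≠ 0 := by positivity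
    push_cast
    field_simp
    ring

lemma deriv_td : d⁄dX ℚ tdSeries = -(tdSeries * tdSeries) * d⁄dX ℚ Sser := by
  have h := congrArg (d⁄dX ℚ) td_mul_S
  rw [Derivation.leibniz, Derivation.map_one_eq_zero, smul_eq_mul, smul_eq_mul] at h
  have h2 := congrArg (tdSeries * ·) h
  simp only [mul_add, mul_zero] at h2
  have h3 : tdSeries * (Sser * d⁄dX ℚ tdSeries) = d⁄dX ℚ tdSeries := by
    rw [← mul_assoc, td_mul_S, one_mul]
  rw [h3] at h2
  linear_combination h2

lemma key_s1 (k : ℕ) (hk : 1 ≤ k) :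
    PowerSeries.coeff k (Eser * tdSeries ^ (k+1)) = 0 := by
  obtain ⟨j, rfl⟩ : ∃ j, k = j + 1 := ⟨k - 1, (Nat.succ_pred_eq_of_pos hk).symm⟩
  have hpow : Sser * tdSeries ^ (j+1+1) = tdSeries ^ (j+1) := by
    rw [pow_succ', ← mul_assoc, S_mul_td, one_mul]
  have e1 : Eser * tdSeries ^ (j+1+1)
      = tdSeries ^ (j+1) + (PowerSeries.X * d⁄dX ℚ Sser) * tdSeries ^ (j+1+1) := by
    rw [Eser_eq_deriv, add_mul, hpow, mul_assoc]
  have hcast : ((j+1 : ℕ) : PowerSeries ℚ) = PowerSeries.C ((j+1 : ℕ) : ℚ) := by simp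
  have e2 : d⁄dX ℚ (PowerSeries.X * tdSeries ^ (j+1))
      = tdSeries ^ (j+1)
        - PowerSeries.C ((j+1 : ℕ) : ℚ)
          * ((PowerSeries.X * d⁄dX ℚ Sser) * tdSeries ^ (j+1+1)) := by
    rw [Derivation.leibniz, PowerSeries.derivative_X, smul_eq_mul, smul_eq_mul, mul_one,
      Derivation.leibniz_pow, deriv_td, Nat.add_sub_cancel]
    simp only [smul_eq_mul, nsmul_eq_mul, hcast]
    rw [pow_succ, pow_succ]
    ring
  have c2 := congrArg (PowerSeries.coeff (j+1)) e2
  rw [PowerSeries.coeff_derivative, PowerSeries.coeff_succ_X_mul, map_sub,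
    PowerSeries.coeff_C_mul] at c2
  have hkQ : ((j+1 : ℕ) : ℚ) ≠ 0 := by positivity
  have hkQ' : ((j : ℚ) + 1) ≠ 0 := by positivity
  have c3 : PowerSeries.coeff (j+1) ((PowerSeries.X * d⁄dX ℚ Sser) * tdSeries ^ (j+1+1))
      = - PowerSeries.coeff (j+1) (tdSeries ^ (j+1)) := by
    push_cast at c2
    refine mul_left_cancel₀ hkQ' ?_
    linear_combination c2
  rw [e1, map_add, c3]
  ring

lemma main_vanish : ∀ m n : ℕ, 1 ≤ m → m ≤ n →
    PowerSeries.coeff n (tdSeries ^ (n+1) * Eser ^ m) = 0 := by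
  intro m
  induction m with
  | zero => intro n h; omega
  | succ m ih =>
    intro n _ hmn
    rcases Nat.eq_zero_or_pos m with hm0 | hm1
    · subst hm0
      rw [pow_one, mul_comm]
      exact key_s1 n (by omega)
    · obtain ⟨n', rfl⟩ : ∃ n', n = n' + 1 := ⟨n - 1, by omega⟩
      have expand : tdSeries ^ (n'+1+1) * Eser ^ (m+1)
          = tdSeries ^ (n'+1+1) * Eser ^ m
            - PowerSeries.X * (tdSeries ^ (n'+1) * Eser ^ m) := by
        calc tdSeries ^ (n'+1+1) * Eser ^ (m+1)
            = tdSeries ^ (n'+1+1) * Eser ^ m * (1 - PowerSeries.X * Sser) := by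
              rw [pow_succ, ← Eser_eq_one_sub]; ring
          _ = tdSeries ^ (n'+1+1) * Eser ^ m
              - PowerSeries.X * ((Sser * tdSeries) * (tdSeries ^ (n'+1) * Eser ^ m)) := by
              rw [pow_succ]; ring
          _ = _ := by rw [S_mul_td, one_mul]
      rw [expand, map_sub, ih (n'+1) hm1 (by omega),
        PowerSeries.coeff_succ_X_mul, ih n' hm1 (by omega)]
      ring

theorem coeff_td_pow_exp_pow_vanishing (r p a : ℕ) (h : a > p) :
    PowerSeries.coeff (r + a)
      (tdSeries ^ (r + 1) * (PowerSeries.exp ℚ) ^ p * (tdSeries - PowerSeries.X) ^ a)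
      = 0 := by
  have htdX : tdSeries - PowerSeries.X = tdSeries * Eser := by
    rw [Eser_eq_one_sub, mul_sub, mul_one,
      show tdSeries * (PowerSeries.X * Sser) = PowerSeries.X * (tdSeries * Sser) by ring,
      td_mul_S, mul_one]
  obtain ⟨b, rfl⟩ : ∃ b, a = p + b := ⟨a - p, by omega⟩
  have hb : 1 ≤ b := by omega
  have hreduce : tdSeries ^ (r + 1) * (PowerSeries.exp ℚ) ^ p
      * (tdSeries - PowerSeries.X) ^ (p + b)
      = tdSeries ^ (r + (p + b) + 1) * Eser ^ b := by
    rw [htdX, mul_pow, pow_add Eser]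
    have hone : (PowerSeries.exp ℚ) ^ p * Eser ^ p = 1 := by
      rw [← mul_pow, exp_mul_E, one_pow]
    calc tdSeries ^ (r + 1) * (PowerSeries.exp ℚ) ^ p
        * (tdSeries ^ (p + b) * (Eser ^ p * Eser ^ b))
        = tdSeries ^ (r + 1) * tdSeries ^ (p + b)
          * ((PowerSeries.exp ℚ) ^ p * Eser ^ p) * Eser ^ b := by ring
      _ = tdSeries ^ (r + (p + b) + 1) * Eser ^ b := by
          rw [hone, mul_one, ← pow_add]; ring_nf
  rw [hreduce]
  exact main_vanish b (r + (p + b)) hb (by omega)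
end

section
/- Let K be a symmetric invertible real (k+1)×(k+1) matrix and let i be an index. Let K' denote the k×k principal submatrix of K obtained by deleting the i-th row and i-th column, and assume K' is also invertible. Write |M| for the sum of all entries of a matrix M, and C_i = Σ_j (K⁻¹)_{ij} for the i-th row sum of K⁻¹. Then (det(K')/det(K)) · ( |K⁻¹| − |K'⁻¹| ) = C_i². -/
open Matrix Finset

theorem det_ratio_entry_sum_diff_eq_rowsum_sq (k : ℕ)
    (K : Matrix (Fin (k + 1)) (Fin (k + 1)) ℝ)
    (hsymm : K.IsSymm) (hK : K.det ≠ 0) (i : Fin (k + 1))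
    (hK' : (K.submatrix i.succAbove i.succAbove).det ≠ 0) :
    ((K.submatrix i.succAbove i.succAbove).det / K.det) *
        ((∑ a, ∑ b, K⁻¹ a b) - ∑ a, ∑ b, (K.submatrix i.succAbove i.succAbove)⁻¹ a b)
      = (∑ j, K⁻¹ i j) ^ 2 := by
  set σ := i.succAbove with hσ
  have hsymminv : ∀ a b, K⁻¹ a b = K⁻¹ b a := by
    intro a b
    have : K⁻¹ᵀ = K⁻¹ := by
      rw [Matrix.transpose_nonsing_inv, hsymm.eq]
    have h2 := congrFun (congrFun this b) a
    simpa [Matrix.transpose_apply] using h2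
  have hd : K⁻¹ i i = (K.submatrix σ σ).det / K.det := by
    rw [Matrix.inv_def, Matrix.smul_apply, Matrix.adjugate_fin_succ_eq_det_submatrix, ← hσ,
      ← two_mul, pow_mul, neg_one_sq, one_pow, one_mul, Ring.inverse_eq_inv, smul_eq_mul,
      inv_mul_eq_div]
  set d := K⁻¹ i i with hdd
  have hdne : d ≠ 0 := by
    rw [hd]; exact div_ne_zero hK' hK
  have hmul : ∀ a b, ∑ c, K a c * K⁻¹ c b = if a = b then 1 else 0 := by
    intro a b
    have := Matrix.mul_nonsing_inv K (isUnit_iff_ne_zero.2 hK)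
    have h2 := congrFun (congrFun this a) b
    simpa [Matrix.mul_apply, Matrix.one_apply] using h2
  set B : Matrix (Fin k) (Fin k) ℝ :=
    fun a b => K⁻¹ (σ a) (σ b) - K⁻¹ (σ a) i * K⁻¹ i (σ b) / d with hB
  have hσne : ∀ a : Fin k, σ a ≠ i := fun a => Fin.succAbove_ne i a
  have hinvB : (K.submatrix σ σ)⁻¹ = B := by
    apply Matrix.inv_eq_right_inv
    ext a b
    rw [Matrix.mul_apply]
    have key : ∀ b' : Fin (k+1), ∑ c : Fin k, K (σ a) (σ c) * K⁻¹ (σ c) b' =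
        (if σ a = b' then 1 else 0) - K (σ a) i * K⁻¹ i b' := by
      intro b'
      have := hmul (σ a) b'
      rw [Fin.sum_univ_succAbove (fun c => K (σ a) c * K⁻¹ c b') i] at this
      linarith [this]
    simp only [hB, Matrix.submatrix_apply, Matrix.one_apply]
    have expand : ∑ c : Fin k, K (σ a) (σ c) *
        (K⁻¹ (σ c) (σ b) - K⁻¹ (σ c) i * K⁻¹ i (σ b) / d) =
        (∑ c : Fin k, K (σ a) (σ c) * K⁻¹ (σ c) (σ b))
        - (∑ c : Fin k, K (σ a) (σ c) * K⁻¹ (σ c) i) * (K⁻¹ i (σ b) / d) := by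
      rw [Finset.sum_mul, ← Finset.sum_sub_distrib]
      congr 1; ext c; ring
    rw [expand, key (σ b), key i]
    have h1 : (if σ a = i then (1:ℝ) else 0) = 0 := by simp [hσne a]
    rw [h1]
    have h2 : (if σ a = σ b then (1:ℝ) else 0) = if a = b then 1 else 0 := by
      by_cases h : a = b
      · simp [h]
      · rw [if_neg h, if_neg (fun hh => h (Fin.succAbove_right_injective hh))]
    rw [h2, zero_sub, neg_mul, sub_neg_eq_add, mul_assoc, mul_div_assoc',
      mul_div_cancel_left₀ _ hdne]
    ring
  rw [hinvB]
  set C := ∑ j, K⁻¹ i j with hC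
  have hCcol : ∑ a, K⁻¹ a i = C := by
    rw [hC]; exact Finset.sum_congr rfl fun a _ => hsymminv a i
  have hrow : ∑ b : Fin k, K⁻¹ i (σ b) = C - d := by
    have := Fin.sum_univ_succAbove (fun b => K⁻¹ i b) i
    rw [← hC] at this
    linarith [this]
  have hcol' : ∑ a : Fin k, K⁻¹ (σ a) i = C - d := by
    have := Fin.sum_univ_succAbove (fun a => K⁻¹ a i) i
    rw [hCcol] at this
    linarith [this]
  have hsplit : (∑ a, ∑ b, K⁻¹ a b) =
      C + ((C - d) + ∑ a : Fin k, ∑ b : Fin k, K⁻¹ (σ a) (σ b)) := by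
    rw [Fin.sum_univ_succAbove (fun a => ∑ b, K⁻¹ a b) i]
    congr 1
    have h3 : ∀ a : Fin k, ∑ b, K⁻¹ (σ a) b = K⁻¹ (σ a) i + ∑ b : Fin k, K⁻¹ (σ a) (σ b) :=
      fun a => Fin.sum_univ_succAbove (fun b => K⁻¹ (σ a) b) i
    rw [Finset.sum_congr rfl (fun a _ => h3 a), Finset.sum_add_distrib, hcol']
  have hBsum : ∑ a : Fin k, ∑ b : Fin k, B a b =
      (∑ a : Fin k, ∑ b : Fin k, K⁻¹ (σ a) (σ b)) - (C - d) * (C - d) / d := by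
    simp only [hB]
    have h4 : ∀ a : Fin k, ∑ b : Fin k,
        (K⁻¹ (σ a) (σ b) - K⁻¹ (σ a) i * K⁻¹ i (σ b) / d) =
        (∑ b : Fin k, K⁻¹ (σ a) (σ b)) - K⁻¹ (σ a) i * (C - d) / d := by
      intro a
      rw [Finset.sum_sub_distrib]
      congr 1
      rw [← Finset.sum_div, ← Finset.mul_sum, hrow]
    rw [Finset.sum_congr rfl (fun a _ => h4 a), Finset.sum_sub_distrib]
    congr 1
    rw [← Finset.sum_div, ← Finset.sum_mul, hcol']
  rw [hsplit, hBsum, ← hd]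
  field_simp
  ring
end

section
/- Let n ≥ 1 and let K be a real n×n matrix. In the exterior algebra Λ(ℝ^{2n}) with standard basis e_1,…,e_{2n}, write ψ_i = ι(e_i) and ψ̄_i = ι(e_{n+i}) for 1 ≤ i ≤ n, and set Q = Σ_{i,j} K_{ij} ψ̄_i ∧ ψ_j. Then the n-th power of Q satisfies Q^n = n! · det(K) · Ω, where Ω = ψ̄_1 ∧ ψ_1 ∧ ψ̄_2 ∧ ψ_2 ∧ ⋯ ∧ ψ̄_n ∧ ψ_n. -/
open ExteriorAlgebra

section Aux
variable {V : Type*} [AddCommGroup V] [Module ℝ V]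

lemma gga_ianti (a b : V) : ι ℝ a * ι ℝ b = -(ι ℝ b * ι ℝ a) :=
  eq_neg_of_add_eq_zero_left (ι_add_mul_swap a b)

lemma gga_H (a x c y : V) :
    (ι ℝ a * ι ℝ x) * (ι ℝ c * ι ℝ y) = (ι ℝ a * ι ℝ c) * (ι ℝ y * ι ℝ x) := by
  rw [mul_assoc, ← mul_assoc (ι ℝ x), gga_ianti x c, neg_mul, mul_neg, mul_assoc,
    gga_ianti x y, mul_neg, mul_neg, neg_neg, ← mul_assoc, ← mul_assoc]

lemma gga_e1 (a b c : V) : (ι ℝ a * ι ℝ c) * (ι ℝ b * ι ℝ c) = 0 := by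
  rw [gga_H, ι_sq_zero, mul_zero]

lemma gga_e2 (a x y : V) : (ι ℝ a * ι ℝ x) * (ι ℝ a * ι ℝ y) = 0 := by
  rw [gga_H, ι_sq_zero, zero_mul]

lemma gga_e3 (a x c y : V) :
    (ι ℝ a * ι ℝ x) * (ι ℝ c * ι ℝ y) = -((ι ℝ a * ι ℝ y) * (ι ℝ c * ι ℝ x)) := by
  rw [gga_H, gga_H a y, gga_ianti x y, mul_neg, neg_neg]

lemma gga_comm4 (a b c d : V) : Commute (ι ℝ a * ι ℝ b) (ι ℝ c * ι ℝ d) := by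
  show _ = _
  rw [gga_H, gga_H c d a b, gga_ianti c a, gga_ianti b d, neg_mul_neg]

end Aux

/-- The subalgebra of the exterior algebra generated by products of two generators. -/
noncomputable def ggaA (V : Type*) [AddCommGroup V] [Module ℝ V] :
    Subalgebra ℝ (ExteriorAlgebra ℝ V) :=
  Algebra.adjoin ℝ (Set.range fun p : V × V => ι ℝ p.1 * ι ℝ p.2)

noncomputable instance {V : Type*} [AddCommGroup V] [Module ℝ V] : CommRing (ggaA V) :=
  Algebra.adjoinCommRingOfComm ℝ (by
    rintro _ ⟨⟨a, b⟩, rfl⟩ _ ⟨⟨c, d⟩, rfl⟩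
    exact gga_comm4 a b c d)

noncomputable def ggaB {V : Type*} [AddCommGroup V] [Module ℝ V] (u v : V) : ggaA V :=
  ⟨ι ℝ u * ι ℝ v, Algebra.subset_adjoin ⟨(u, v), rfl⟩⟩

set_option maxHeartbeats 1000000 in
set_option synthInstance.maxHeartbeats 400000 in
theorem gga_main {V : Type*} [AddCommGroup V] [Module ℝ V] (n : ℕ)
    (K : Matrix (Fin n) (Fin n) ℝ) (u v : Fin n → V) :
    (∑ i : Fin n, ∑ j : Fin n, K i j • (ι ℝ (u i) * ι ℝ (v j))) ^ n
      = ((n.factorial : ℝ) * K.det) •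
        ((List.finRange n).map fun i => ι ℝ (u i) * ι ℝ (v i)).prod := by
  classical
  set b : Fin n → Fin n → ggaA V := fun i j => ggaB (u i) (v j) with hb
  -- extracting two factors from a product
  have split : ∀ (k1 k2 : Fin n), k1 ≠ k2 → ∀ (G : Fin n → ggaA V),
      ∏ k, G k = G k1 * (G k2 * ∏ k ∈ (Finset.univ.erase k1).erase k2, G k) := by
    intro k1 k2 hne G
    rw [← Finset.mul_prod_erase _ _ (Finset.mem_univ k1),
      ← Finset.mul_prod_erase _ _ (Finset.mem_erase.mpr ⟨hne.symm, Finset.mem_univ k2⟩)]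
    congr
  -- vanishing when two factors share a vector
  have hzero : ∀ (i1 i2 j1 j2 : Fin n), (u i1 = u i2 ∨ v j1 = v j2) →
      b i1 j1 * b i2 j2 = 0 := by
    rintro i1 i2 j1 j2 (h | h) <;>
      · apply Subtype.ext
        show (ι ℝ (u i1) * ι ℝ (v j1)) * (ι ℝ (u i2) * ι ℝ (v j2)) = 0
        first
        | (rw [h]; exact gga_e2 _ _ _)
        | (rw [h]; exact gga_e1 _ _ _)
  -- vanishing of the product when an index repeats
  have hG0 : ∀ (g f : Fin n → Fin n),
      (¬ Function.Injective g ∨ ¬ Function.Injective f) →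
      ∏ k, b (g k) (f k) = 0 := by
    intro g f hinj
    have key : ∃ k1 k2 : Fin n, k1 ≠ k2 ∧ b (g k1) (f k1) * b (g k2) (f k2) = 0 := by
      rcases hinj with h | h
      · obtain ⟨k1, k2, hval, hne⟩ := Function.not_injective_iff.mp h
        exact ⟨k1, k2, hne, hzero _ _ _ _ (Or.inl (by rw [hval]))⟩
      · obtain ⟨k1, k2, hval, hne⟩ := Function.not_injective_iff.mp h
        exact ⟨k1, k2, hne, hzero _ _ _ _ (Or.inr (by rw [hval]))⟩
    obtain ⟨k1, k2, hne, h0⟩ := key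
    rw [split k1 k2 hne, ← mul_assoc, h0, zero_mul]
  -- the sign flip under a swap of the second indices
  have hswap : ∀ (f : Fin n → Fin n) (k1 k2 : Fin n), k1 ≠ k2 →
      ∏ k, b k (f (Equiv.swap k1 k2 k)) = -∏ k, b k (f k) := by
    intro f k1 k2 hne
    have hpair : b k1 (f k2) * b k2 (f k1) = -(b k1 (f k1) * b k2 (f k2)) := by
      apply Subtype.ext
      show (ι ℝ (u k1) * ι ℝ (v (f k2))) * (ι ℝ (u k2) * ι ℝ (v (f k1)))
        = -((ι ℝ (u k1) * ι ℝ (v (f k1))) * (ι ℝ (u k2) * ι ℝ (v (f k2))))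
      exact gga_e3 _ _ _ _
    have hrest : ∏ k ∈ (Finset.univ.erase k1).erase k2, b k (f (Equiv.swap k1 k2 k))
        = ∏ k ∈ (Finset.univ.erase k1).erase k2, b k (f k) := by
      refine Finset.prod_congr rfl fun k hk => ?_
      rw [Equiv.swap_apply_of_ne_of_ne
        (Finset.ne_of_mem_erase (Finset.mem_of_mem_erase hk)) (Finset.ne_of_mem_erase hk)]
    rw [split k1 k2 hne (fun k => b k (f (Equiv.swap k1 k2 k))),
      split k1 k2 hne (fun k => b k (f k)), hrest, Equiv.swap_apply_left,
      Equiv.swap_apply_right, ← mul_assoc, ← mul_assoc, hpair]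
    exact neg_mul _ _
  -- sign of a permutation
  have hsign : ∀ π : Equiv.Perm (Fin n),
      ∏ k, b k (π k) = ((Equiv.Perm.sign π : ℤˣ) : ℤ) • ∏ k, b k k := by
    intro π
    refine Equiv.Perm.swap_induction_on π ?_ ?_
    · simp
    · intro f x y hxy ih
      have hk : (f⁻¹ x : Fin n) ≠ f⁻¹ y := fun h => hxy (by
        have := congrArg f h; simpa using this)
      have hcomp : ∀ k : Fin n, (Equiv.swap x y * f) k = f (Equiv.swap (f⁻¹ x) (f⁻¹ y) k) := by
        intro k
        rcases eq_or_ne k (f⁻¹ x) with rfl | h1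
        · simp
        · rcases eq_or_ne k (f⁻¹ y) with rfl | h2
          · simp
          · rw [Equiv.swap_apply_of_ne_of_ne h1 h2]
            show Equiv.swap x y (f k) = f k
            apply Equiv.swap_apply_of_ne_of_ne
            · exact fun h => h1 (by rw [← h]; simp)
            · exact fun h => h2 (by rw [← h]; simp)
      calc ∏ k, b k ((Equiv.swap x y * f) k)
          = ∏ k, b k (f (Equiv.swap (f⁻¹ x) (f⁻¹ y) k)) :=
            Finset.prod_congr rfl fun k _ => by rw [hcomp]
        _ = -∏ k, b k (f k) := hswap (⇑f) _ _ hk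
        _ = ((Equiv.Perm.sign (Equiv.swap x y * f) : ℤˣ) : ℤ) • ∏ k, b k k := by
            rw [ih, Equiv.Perm.sign_mul, Equiv.Perm.sign_swap hxy]
            simp
            rfl
  -- product over a pair of permutations
  have hperm : ∀ σ τ : Equiv.Perm (Fin n),
      ∏ k, b (σ k) (τ k)
        = ((Equiv.Perm.sign σ * Equiv.Perm.sign τ : ℤˣ) : ℤ) • ∏ k, b k k := by
    intro σ τ
    have h1 : ∏ k, b (σ k) (τ k) = ∏ k, b k ((τ * σ⁻¹) k) := by
      rw [← Equiv.prod_comp σ (fun k => b k ((τ * σ⁻¹) k))]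
      exact Finset.prod_congr rfl fun k _ => by simp
    have h2 : Equiv.Perm.sign (τ * σ⁻¹) = Equiv.Perm.sign σ * Equiv.Perm.sign τ := by
      rw [Equiv.Perm.sign_mul, Equiv.Perm.sign_inv, mul_comm]
    rw [h1, hsign, h2]
  -- expansion of the power of the sum
  have expand : (∑ i, ∑ j, K i j • b i j) ^ n
      = ∑ g : Fin n → Fin n × Fin n,
          (∏ k, K (g k).1 (g k).2) • ∏ k, b (g k).1 (g k).2 := by
    rw [← Fintype.sum_prod_type' (f := fun i j => K i j • b i j)]
    refine (Fintype.sum_pow _ _).trans ?_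
    refine Finset.sum_congr rfl fun g _ => ?_
    simp only [Algebra.smul_def]
    exact Finset.prod_mul_distrib.trans (congrArg (· * ∏ k, b (g k).1 (g k).2)
      (map_prod (algebraMap ℝ (ggaA V)) _ _).symm)
  -- only pairs of permutations contribute
  have hvanish : ∀ g : Fin n → Fin n × Fin n,
      g ∉ Finset.image (fun στ : Equiv.Perm (Fin n) × Equiv.Perm (Fin n) =>
          (fun k => (στ.1 k, στ.2 k) : Fin n → Fin n × Fin n)) Finset.univ →
      (∏ k, K (g k).1 (g k).2) • ∏ k, b (g k).1 (g k).2 = 0 := by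
    intro g hg
    have hni : ¬ Function.Injective (fun k => (g k).1)
        ∨ ¬ Function.Injective (fun k => (g k).2) := by
      by_contra hc
      push_neg at hc
      apply hg
      refine Finset.mem_image.mpr
        ⟨(Equiv.ofBijective _ (Finite.injective_iff_bijective.mp hc.1),
          Equiv.ofBijective _ (Finite.injective_iff_bijective.mp hc.2)),
          Finset.mem_univ _, funext fun k => ?_⟩
      show ((g k).1, (g k).2) = g k
      rfl
    have h0 := hG0 (fun k => (g k).1) (fun k => (g k).2) hni
    rw [h0, smul_zero]
  have hinjP : ∀ x ∈ (Finset.univ : Finset (Equiv.Perm (Fin n) × Equiv.Perm (Fin n))),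
      ∀ y ∈ (Finset.univ : Finset (Equiv.Perm (Fin n) × Equiv.Perm (Fin n))),
      (fun k => (x.1 k, x.2 k) : Fin n → Fin n × Fin n) = (fun k => (y.1 k, y.2 k)) → x = y := by
    intro x _ y _ hxy
    obtain ⟨x1, x2⟩ := x
    obtain ⟨y1, y2⟩ := y
    simp only [Prod.mk.injEq]
    exact ⟨Equiv.ext fun k => congrArg Prod.fst (congrFun hxy k),
      Equiv.ext fun k => congrArg Prod.snd (congrFun hxy k)⟩
  -- the inner sum over one permutation
  have hsignmul : ∀ σ π : Equiv.Perm (Fin n),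
      Equiv.Perm.sign σ * Equiv.Perm.sign (π * σ) = Equiv.Perm.sign π := by
    intro σ π
    rw [Equiv.Perm.sign_mul, mul_comm, mul_assoc, Int.units_mul_self, mul_one]
  have inner : ∀ σ : Equiv.Perm (Fin n),
      ∑ τ : Equiv.Perm (Fin n), (∏ k, K (σ k) (τ k)) • ∏ k, b (σ k) (τ k)
        = K.det • ∏ k, b k k := by
    intro σ
    rw [← Equiv.sum_comp (Equiv.mulRight σ)
      (fun τ => (∏ k, K (σ k) (τ k)) • ∏ k, b (σ k) (τ k))]
    simp only [Equiv.coe_mulRight]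
    have hterm : ∀ π : Equiv.Perm (Fin n),
        (∏ k, K (σ k) ((π * σ) k)) • ∏ k, b (σ k) ((π * σ) k)
          = (((((Equiv.Perm.sign π : ℤˣ) : ℤ) : ℝ)) * ∏ i, K i (π i)) • ∏ k, b k k := by
      intro π
      have hco : ∏ k, K (σ k) ((π * σ) k) = ∏ i, K i (π i) := by
        rw [← Equiv.prod_comp σ (fun i => K i (π i))]
        exact Finset.prod_congr rfl fun k _ => rfl
      have hbb : ∏ k, b (σ k) ((π * σ) k) = ((Equiv.Perm.sign π : ℤˣ) : ℤ) • ∏ k, b k k := by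
        rw [hperm σ (π * σ), hsignmul σ π]
      rw [hco, hbb, ← Int.cast_smul_eq_zsmul ℝ, smul_smul, mul_comm]
    calc ∑ π : Equiv.Perm (Fin n), (∏ k, K (σ k) ((π * σ) k)) • ∏ k, b (σ k) ((π * σ) k)
        = ∑ π : Equiv.Perm (Fin n),
            (((((Equiv.Perm.sign π : ℤˣ) : ℤ) : ℝ)) * ∏ i, K i (π i)) • ∏ k, b k k :=
          Finset.sum_congr rfl fun π _ => hterm π
      _ = (∑ π : Equiv.Perm (Fin n),
            ((((Equiv.Perm.sign π : ℤˣ) : ℤ) : ℝ)) * ∏ i, K i (π i)) • ∏ k, b k k :=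
          (Finset.sum_smul).symm
      _ = K.det • ∏ k, b k k := by
          congr 1
          rw [← Matrix.det_transpose K, Matrix.det_apply']
          exact Finset.sum_congr rfl fun π _ => by
            simp [Matrix.transpose_apply]
  -- putting the sum together
  have main : (∑ i, ∑ j, K i j • b i j) ^ n
      = ((n.factorial : ℝ) * K.det) • ∏ k, b k k := by
    rw [expand, ← Finset.sum_subset (Finset.subset_univ _) (fun g _ hg => hvanish g hg),
      Finset.sum_image hinjP, Fintype.sum_prod_type]
    have hin : ∀ σ : Equiv.Perm (Fin n),
        (∑ τ : Equiv.Perm (Fin n),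
          (∏ k, K ((fun k => (σ k, τ k)) k).1 ((fun k => (σ k, τ k)) k).2) •
            ∏ k, b ((fun k => (σ k, τ k)) k).1 ((fun k => (σ k, τ k)) k).2)
          = K.det • ∏ k, b k k := fun σ => inner σ
    rw [Finset.sum_congr rfl fun σ _ => hin σ, Finset.sum_const, Finset.card_univ,
      Fintype.card_perm, Fintype.card_fin, ← Nat.cast_smul_eq_nsmul ℝ, smul_smul]
  -- transferring to the exterior algebra
  have hcoe1 : ((∑ i : Fin n, ∑ j : Fin n, K i j • b i j : ggaA V) : ExteriorAlgebra ℝ V)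
      = ∑ i : Fin n, ∑ j : Fin n, K i j • (ι ℝ (u i) * ι ℝ (v j)) := by
    push_cast
    rfl
  have hcoe2 : ((∏ k, b k k : ggaA V) : ExteriorAlgebra ℝ V)
      = ((List.finRange n).map fun i => ι ℝ (u i) * ι ℝ (v i)).prod := by
    rw [← List.prod_ofFn (f := fun k => b k k)]
    calc (((List.ofFn fun k => b k k).prod : ggaA V) : ExteriorAlgebra ℝ V)
        = (ggaA V).val (List.ofFn fun k => b k k).prod := rfl
      _ = ((List.ofFn fun k => b k k).map (ggaA V).val).prod := map_list_prod _ _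
      _ = (List.ofFn fun k => ι ℝ (u k) * ι ℝ (v k)).prod := by rw [List.map_ofFn]; rfl
      _ = _ := by rw [List.ofFn_eq_map]
  calc (∑ i : Fin n, ∑ j : Fin n, K i j • (ι ℝ (u i) * ι ℝ (v j))) ^ n
      = (((∑ i : Fin n, ∑ j : Fin n, K i j • b i j) ^ n : ggaA V) : ExteriorAlgebra ℝ V) := by
        rw [← hcoe1]
        push_cast
        rfl
    _ = ((((n.factorial : ℝ) * K.det) • (∏ k, b k k) : ggaA V) : ExteriorAlgebra ℝ V) := by
        rw [main]
    _ = ((n.factorial : ℝ) * K.det) •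
          ((List.finRange n).map fun i => ι ℝ (u i) * ι ℝ (v i)).prod := by
        rw [← hcoe2]
        push_cast
        rfl

set_option maxHeartbeats 1000000 in
set_option synthInstance.maxHeartbeats 400000 in
theorem grassmann_gaussian_top_power (n : ℕ) (hn : 1 ≤ n)
    (K : Matrix (Fin n) (Fin n) ℝ) :
    let ψ : Fin n → ExteriorAlgebra ℝ (Fin (2 * n) → ℝ) :=
      fun i => ι ℝ (Pi.single (⟨i.val, by have := i.2; omega⟩ : Fin (2 * n)) (1 : ℝ))
    let ψbar : Fin n → ExteriorAlgebra ℝ (Fin (2 * n) → ℝ) :=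
      fun i => ι ℝ (Pi.single (⟨n + i.val, by have := i.2; omega⟩ : Fin (2 * n)) (1 : ℝ))
    let Q : ExteriorAlgebra ℝ (Fin (2 * n) → ℝ) :=
      ∑ i : Fin n, ∑ j : Fin n, K i j • (ψbar i * ψ j)
    let Ω : ExteriorAlgebra ℝ (Fin (2 * n) → ℝ) :=
      ((List.finRange n).map fun i => ψbar i * ψ i).prod
    Q ^ n = ((n.factorial : ℝ) * K.det) • Ω := by
  intro ψ ψbar Q Ω
  have := gga_main (V := Fin (2 * n) → ℝ) n K
    (fun i => Pi.single (⟨n + i.val, by have := i.2; omega⟩ : Fin (2 * n)) (1 : ℝ))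
    (fun i => Pi.single (⟨i.val, by have := i.2; omega⟩ : Fin (2 * n)) (1 : ℝ))
  exact this
end

section
/- Let n ≥ 1 and let K be a real n×n matrix. In the exterior algebra Λ(ℝ^{2n+2}) with standard basis e_1,…,e_{2n+2}, write ψ_i = ι(e_i), ψ̄_i = ι(e_{n+i}) for 1 ≤ i ≤ n, α = ι(e_{2n+1}), β = ι(e_{2n+2}), and set S = Σ_{i,j} K_{ij} ψ̄_i ∧ ψ_j − Σ_i α ∧ ψ_i − Σ_i ψ̄_i ∧ β. Then S^{n+1} = −(n+1)! · |adj(K)| · Ω ∧ α ∧ β, where |adj(K)| denotes the sum of all entries of the adjugate matrix of K, and Ω = ψ̄_1 ∧ ψ_1 ∧ ⋯ ∧ ψ̄_n ∧ ψ_n. (When K is invertible this says the top-degree part of the Grassmann Gaussian exp(S) equals det(K)·e^{−|K⁻¹| α∧β}, since det(K)·|K⁻¹| = |adj(K)|.) -/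
open Finset

section Core
variable {R : Type*} [CommRing R]

lemma sq_zero_add_pow (x y : R) (hx : x * x = 0) (k : ℕ) :
    (x + y) ^ (k + 1) = y ^ (k + 1) + ((k : R) + 1) * (x * y ^ k) := by
  induction k with
  | zero => push_cast; ring
  | succ k ih =>
    have h1 : (x + y) ^ (k + 1 + 1) = (x + y) * (x + y) ^ (k + 1) := by ring
    rw [h1, ih]
    push_cast
    linear_combination ((k : R) + 1) * y ^ k * hx

lemma sum_sq_zero_pow {ι : Type*} [DecidableEq ι] (s : Finset ι) (w : ι → R)
    (hw : ∀ i ∈ s, w i * w i = 0) :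
    (∑ i ∈ s, w i) ^ s.card = (s.card.factorial : R) * ∏ i ∈ s, w i ∧
      (∑ i ∈ s, w i) ^ (s.card + 1) = 0 := by
  induction s using Finset.induction_on with
  | empty => simp
  | @insert a s ha ih =>
    obtain ⟨ih1, ih2⟩ := ih (fun i hi => hw i (mem_insert_of_mem hi))
    have hwa : w a * w a = 0 := hw a (mem_insert_self a s)
    rw [card_insert_of_notMem ha, sum_insert ha, prod_insert ha]
    constructor
    · rw [sq_zero_add_pow _ _ hwa, ih2, ih1, Nat.factorial_succ]
      push_cast
      ring
    · rw [sq_zero_add_pow _ _ hwa, pow_succ, ih2]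
      simp
end Core

section Perm
variable {R : Type*} [CommRing R] {m : ℕ} (z : Fin m → Fin m → R)

lemma prod_swap_two
    (hswap : ∀ i j k l, z i j * z k l = -(z i l * z k j))
    (g g' : Fin m → Fin m) (p q : Fin m) (hpq : p ≠ q)
    (h1 : g' p = g q) (h2 : g' q = g p)
    (h3 : ∀ i, i ≠ p → i ≠ q → g' i = g i) :
    ∏ i, z i (g' i) = -∏ i, z i (g i) := by
  have hq : q ∈ Finset.univ.erase p := by simp [hpq.symm]
  rw [← Finset.mul_prod_erase Finset.univ _ (Finset.mem_univ p),
    ← Finset.mul_prod_erase _ _ hq,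
    ← Finset.mul_prod_erase Finset.univ (fun i => z i (g i)) (Finset.mem_univ p),
    ← Finset.mul_prod_erase _ (fun i => z i (g i)) hq]
  have hrest : ∏ i ∈ (Finset.univ.erase p).erase q, z i (g' i)
      = ∏ i ∈ (Finset.univ.erase p).erase q, z i (g i) := by
    refine Finset.prod_congr rfl fun i hi => ?_
    rw [Finset.mem_erase, Finset.mem_erase] at hi
    rw [h3 i hi.2.1 hi.1]
  rw [hrest, h1, h2, ← mul_assoc, ← mul_assoc, hswap p (g q) q (g p), neg_mul]

lemma prod_perm_sign
    (hswap : ∀ i j k l, z i j * z k l = -(z i l * z k j))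
    (σ : Equiv.Perm (Fin m)) :
    ∏ i, z i (σ i) = (Equiv.Perm.sign σ : ℤ) • ∏ i, z i i := by
  refine Equiv.Perm.swap_induction_on σ ?_ ?_
  · simp
  · intro f x y hxy hf
    have hpq : f⁻¹ x ≠ f⁻¹ y := fun h => hxy (by simpa using congrArg f h)
    have key : ∏ i, z i ((Equiv.swap x y * f) i) = -∏ i, z i (f i) := by
      refine prod_swap_two z hswap f (⇑(Equiv.swap x y * f)) (f⁻¹ x) (f⁻¹ y) hpq ?_ ?_ ?_
      · simp [Equiv.swap_apply_left]
      · simp [Equiv.swap_apply_right]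
      · intro i hip hiq
        have hx : f i ≠ x := fun h => hip (by simp [← h])
        have hy : f i ≠ y := fun h => hiq (by simp [← h])
        simp [Equiv.Perm.mul_apply, Equiv.swap_apply_of_ne_of_ne hx hy]
    have hsgn : Equiv.Perm.sign (Equiv.swap x y * f) = -Equiv.Perm.sign f := by
      rw [Equiv.Perm.sign_mul, Equiv.Perm.sign_swap hxy, neg_one_mul]
    rw [key, hf, hsgn, Units.val_neg, neg_smul]

lemma prod_noninj
    (h2 : ∀ i j k, z i j * z k j = 0)
    (g : Fin m → Fin m) (hg : ¬ Function.Injective g) :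
    ∏ i, z i (g i) = 0 := by
  rw [Function.Injective] at hg
  push_neg at hg
  obtain ⟨p, q, hgpq, hpq⟩ := hg
  have hq : q ∈ Finset.univ.erase p := by simp [Ne.symm hpq]
  rw [← Finset.mul_prod_erase Finset.univ _ (Finset.mem_univ p),
    ← Finset.mul_prod_erase _ _ hq, ← mul_assoc, hgpq, h2, zero_mul]

lemma core_pow (M : Matrix (Fin m) (Fin m) R)
    (hswap : ∀ i j k l, z i j * z k l = -(z i l * z k j))
    (h1 : ∀ i j l, z i j * z i l = 0)
    (h2 : ∀ i j k, z i j * z k j = 0) :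
    (∑ i, ∑ j, M i j * z i j) ^ m = (m.factorial : R) * (M.det * ∏ i, z i i) := by
  classical
  set w : Fin m → R := fun i => ∑ j, M i j * z i j with hw
  have hww : ∀ i ∈ Finset.univ, w i * w i = 0 := by
    intro i _
    rw [hw]
    simp only
    rw [Finset.sum_mul_sum]
    exact Finset.sum_eq_zero fun j _ => Finset.sum_eq_zero fun l _ => by
      rw [mul_mul_mul_comm, h1, mul_zero]
  have hmain := (sum_sq_zero_pow Finset.univ w hww).1
  rw [Finset.card_univ, Fintype.card_fin] at hmain
  have hprod : ∏ i, w i = ∑ g : Fin m → Fin m, (∏ i, M i (g i)) * ∏ i, z i (g i) := by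
    rw [hw]
    simp only
    rw [Finset.prod_univ_sum]
    rw [Fintype.piFinset_univ]
    exact Finset.sum_congr rfl fun g _ => Finset.prod_mul_distrib
  have hsplit : ∑ g : Fin m → Fin m, (∏ i, M i (g i)) * ∏ i, z i (g i)
      = ∑ σ : Equiv.Perm (Fin m), (∏ i, M i (σ i)) * ∏ i, z i (σ i) := by
    rw [← Finset.sum_filter_add_sum_filter_not Finset.univ (fun g => Function.Injective g)]
    have hz : ∑ g ∈ Finset.filter (fun g => ¬ Function.Injective g) Finset.univ,
        (∏ i, M i (g i)) * ∏ i, z i (g i) = 0 :=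
      Finset.sum_eq_zero fun g hg => by
        rw [prod_noninj z h2 g (Finset.mem_filter.mp hg).2, mul_zero]
    rw [hz, add_zero]
    refine (Finset.sum_bij (fun (σ : Equiv.Perm (Fin m)) _ => (⇑σ : Fin m → Fin m))
      ?_ ?_ ?_ ?_).symm
    · intro σ _
      exact Finset.mem_filter.mpr ⟨Finset.mem_univ _, σ.injective⟩
    · intro σ₁ _ σ₂ _ h
      exact Equiv.coe_fn_injective h
    · intro g hg
      have hb : Function.Bijective g :=
        Finite.injective_iff_bijective.mp (Finset.mem_filter.mp hg).2
      exact ⟨Equiv.ofBijective g hb, Finset.mem_univ _, rfl⟩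
    · intro σ _
      rfl
  have hdet : ∑ σ : Equiv.Perm (Fin m), (∏ i, M i (σ i)) * ∏ i, z i (σ i)
      = M.det * ∏ i, z i i := by
    rw [← Matrix.det_transpose M, Matrix.det_apply, Finset.sum_mul]
    refine Finset.sum_congr rfl fun σ _ => ?_
    rw [prod_perm_sign z hswap σ]
    simp only [Units.smul_def, zsmul_eq_mul, Matrix.transpose_apply]
    ring_nf
  rw [show (∑ i, ∑ j, M i j * z i j) = ∑ i, w i from rfl, hmain, hprod, hsplit, hdet]
end Perm
open ExteriorAlgebra

section Ext
variable {R : Type*} {M : Type*} [CommRing R] [AddCommGroup M] [Module R M]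

lemma ext_anticomm (u v : M) : ι R u * ι R v = -(ι R v * ι R u) :=
  eq_neg_of_add_eq_zero_left (ι_add_mul_swap u v)

lemma ext_mulswap (t : ExteriorAlgebra R M) (x y : M) :
    t * ι R x * ι R y = -(t * ι R y * ι R x) := by
  rw [mul_assoc, mul_assoc, ext_anticomm, mul_neg]

lemma ext_swap4 (a b c d : M) :
    ι R a * ι R b * (ι R c * ι R d) = -(ι R a * ι R d * (ι R c * ι R b)) := by
  calc ι R a * ι R b * (ι R c * ι R d) = ι R a * ι R b * ι R c * ι R d :=
        (mul_assoc _ _ _).symm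
    _ = -(ι R a * ι R c * ι R b) * ι R d := by rw [ext_mulswap (ι R a) b c]
    _ = -(ι R a * ι R c * ι R b * ι R d) := neg_mul _ _
    _ = -(-(ι R a * ι R c * ι R d * ι R b)) := by rw [ext_mulswap (ι R a * ι R c) b d]
    _ = ι R a * ι R c * ι R d * ι R b := neg_neg _
    _ = -(ι R a * ι R d * ι R c) * ι R b := by rw [ext_mulswap (ι R a) c d]
    _ = -(ι R a * ι R d * ι R c * ι R b) := neg_mul _ _
    _ = -(ι R a * ι R d * (ι R c * ι R b)) := by rw [mul_assoc (ι R a * ι R d)]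

lemma ext_comm4 (a b c d : M) :
    ι R a * ι R b * (ι R c * ι R d) = ι R c * ι R d * (ι R a * ι R b) := by
  calc ι R a * ι R b * (ι R c * ι R d) = ι R a * ι R b * ι R c * ι R d :=
        (mul_assoc _ _ _).symm
    _ = -(ι R a * ι R c * ι R b) * ι R d := by rw [ext_mulswap (ι R a) b c]
    _ = -(ι R a * ι R c * ι R b * ι R d) := neg_mul _ _
    _ = -(-(ι R a * ι R c * ι R d * ι R b)) := by rw [ext_mulswap (ι R a * ι R c) b d]
    _ = ι R a * ι R c * ι R d * ι R b := neg_neg _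
    _ = -(ι R c * ι R a) * ι R d * ι R b := by rw [ext_anticomm a c]
    _ = -(ι R c * ι R a * ι R d) * ι R b := by rw [neg_mul]
    _ = -(-(ι R c * ι R d * ι R a)) * ι R b := by rw [ext_mulswap (ι R c) a d]
    _ = ι R c * ι R d * ι R a * ι R b := by rw [neg_neg]
    _ = ι R c * ι R d * (ι R a * ι R b) := mul_assoc _ _ _

lemma ext_zsq_left (u v w : M) : ι R u * ι R v * (ι R u * ι R w) = 0 := by
  calc ι R u * ι R v * (ι R u * ι R w) = ι R u * ι R v * ι R u * ι R w :=
        (mul_assoc _ _ _).symm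
    _ = -(ι R u * ι R u * ι R v) * ι R w := by rw [ext_mulswap (ι R u) v u]
    _ = 0 := by rw [ι_sq_zero]; simp

lemma ext_zsq_right (u v w : M) : ι R u * ι R w * (ι R v * ι R w) = 0 := by
  calc ι R u * ι R w * (ι R v * ι R w) = ι R u * ι R w * ι R v * ι R w :=
        (mul_assoc _ _ _).symm
    _ = -(ι R u * ι R v * ι R w) * ι R w := by rw [ext_mulswap (ι R u) w v]
    _ = -(ι R u * ι R v * (ι R w * ι R w)) := by rw [neg_mul, mul_assoc (ι R u * ι R v)]
    _ = 0 := by rw [ι_sq_zero]; simp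
end Ext
open Matrix Fin

section Det
variable {R : Type*} [CommRing R]

lemma det_updateRow_finsum {n : Type*} [DecidableEq n] [Fintype n]
    (A : Matrix n n R) (j : n) {κ : Type*} [DecidableEq κ] (s : Finset κ) (u : κ → n → R) :
    (A.updateRow j (∑ k ∈ s, u k)).det = ∑ k ∈ s, (A.updateRow j (u k)).det := by
  induction s using Finset.induction_on with
  | empty =>
    rw [Finset.sum_empty, Finset.sum_empty]
    exact Matrix.det_eq_zero_of_row_eq_zero j (fun jj => by rw [Matrix.updateRow_self]; rfl)
  | @insert a s ha ih =>
    rw [Finset.sum_insert ha, Finset.sum_insert ha, Matrix.det_updateRow_add, ih]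

lemma det_updateColumn_finsum {n : Type*} [DecidableEq n] [Fintype n]
    (A : Matrix n n R) (j : n) {κ : Type*} [DecidableEq κ] (s : Finset κ) (u : κ → n → R) :
    (A.updateCol j (∑ k ∈ s, u k)).det = ∑ k ∈ s, (A.updateCol j (u k)).det := by
  induction s using Finset.induction_on with
  | empty =>
    rw [Finset.sum_empty, Finset.sum_empty]
    exact Matrix.det_eq_zero_of_column_eq_zero j (fun i => by rw [Matrix.updateCol_self]; rfl)
  | @insert a s ha ih =>
    rw [Finset.sum_insert ha, Finset.sum_insert ha, Matrix.det_updateCol_add, ih]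

lemma adjugate_eq_minor {m : ℕ} (K : Matrix (Fin (m+1)) (Fin (m+1)) R) (a b : Fin (m+1)) :
    K.adjugate a b = (-1 : R)^((a : ℕ)+(b : ℕ)) * (K.submatrix b.succAbove a.succAbove).det := by
  rw [Matrix.adjugate_apply, Matrix.det_succ_row _ b]
  rw [Finset.sum_eq_single a]
  · have hentry : (K.updateRow b (Pi.single a 1)) b a = 1 := by
      rw [Matrix.updateRow_self, Pi.single_eq_same]
    have hsub : (K.updateRow b (Pi.single a 1)).submatrix b.succAbove a.succAbove
        = K.submatrix b.succAbove a.succAbove := by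
      ext i j
      simp only [Matrix.submatrix_apply]
      rw [Matrix.updateRow_ne (Fin.succAbove_ne b i)]
    rw [hentry, hsub, mul_one, Nat.add_comm (b : ℕ) (a : ℕ)]
  · intro j _ hj
    have : (K.updateRow b (Pi.single a 1)) b j = 0 := by
      rw [Matrix.updateRow_self, Pi.single_eq_of_ne hj]
    rw [this, mul_zero, zero_mul]
  · intro h
    exact absurd (Finset.mem_univ a) h

lemma neg_one_pow_helper (m a b : ℕ) (D : R) :
    (-1 : R) * ((-1 : R)^((m+1)+b) * ((-1 : R)^(a+m) * D)) = (-1 : R)^(b+a) * D := by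
  have hsq : ((-1 : R)^m) * ((-1 : R)^m) = 1 := by
    rw [← pow_add, ← two_mul, pow_mul, neg_one_sq, one_pow]
  simp only [pow_add, pow_one]
  linear_combination ((-1 : R)^a * (-1 : R)^b * D) * hsq

lemma det_border {m : ℕ} (K : Matrix (Fin (m+1)) (Fin (m+1)) R) :
    (Matrix.of fun i j : Fin (m+2) =>
        Fin.lastCases (Fin.lastCases (0 : R) (fun _ => 1) j)
          (fun a => Fin.lastCases (-1 : R) (fun b => K a b) j) i).det
      = ∑ a, ∑ b, K.adjugate a b := by
  set A : Matrix (Fin (m+2)) (Fin (m+2)) R := Matrix.of fun i j : Fin (m+2) =>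
      Fin.lastCases (Fin.lastCases (0 : R) (fun _ => 1) j)
        (fun a => Fin.lastCases (-1 : R) (fun b => K a b) j) i with hA
  have hAcc : ∀ (a b : Fin (m+1)), A (castSucc a) (castSucc b) = K a b := by
    intro a b; simp [hA]
  have hAcl : ∀ (a : Fin (m+1)), A (castSucc a) (last (m+1)) = -1 := by
    intro a; simp [hA]
  have hAlc : ∀ (b : Fin (m+1)), A (last (m+1)) (castSucc b) = 1 := by
    intro b; simp [hA]
  have hAll : A (last (m+1)) (last (m+1)) = 0 := by simp [hA]
  -- step 1 : expand along the last row
  set Mb : Fin (m+1) → Matrix (Fin (m+2)) (Fin (m+2)) R :=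
    fun b => A.updateRow (last (m+1)) (Pi.single (castSucc b) 1) with hMb
  have step1 : A.det = ∑ b : Fin (m+1), (Mb b).det := by
    have hrowval : (∑ b : Fin (m+1), (Pi.single (castSucc b) (1 : R) : Fin (m+2) → R))
        = A (last (m+1)) := by
      funext j
      rcases Fin.eq_castSucc_or_eq_last j with ⟨c, rfl⟩ | rfl
      · rw [hAlc, Finset.sum_apply]
        simp [Pi.single_apply, Fin.castSucc_inj]
      · rw [hAll, Finset.sum_apply]
        exact Finset.sum_eq_zero fun b _ =>
          Pi.single_eq_of_ne (Fin.castSucc_lt_last b).ne' 1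
    conv_lhs => rw [← Matrix.updateRow_eq_self A (last (m+1)), ← hrowval]
    rw [det_updateRow_finsum]
  -- step 2 : expand along the last column
  set Mab : Fin (m+1) → Fin (m+1) → Matrix (Fin (m+2)) (Fin (m+2)) R :=
    fun a b => (Mb b).updateCol (last (m+1)) (Pi.single (castSucc a) 1) with hMab
  have step2 : ∀ b : Fin (m+1), (Mb b).det = ∑ a : Fin (m+1), (-1 : R) * (Mab a b).det := by
    intro b
    have hcolval : (∑ a : Fin (m+1), (-1 : R) • (Pi.single (castSucc a) (1 : R) : Fin (m+2) → R))
        = fun i => Mb b i (last (m+1)) := by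
      funext i
      rcases Fin.eq_castSucc_or_eq_last i with ⟨c, rfl⟩ | rfl
      · have hv : Mb b (castSucc c) (last (m+1)) = -1 := by
          rw [hMb]
          simp only
          rw [Matrix.updateRow_ne (Fin.castSucc_lt_last c).ne, hAcl]
        rw [hv, Finset.sum_apply]
        simp [Pi.single_apply, Fin.castSucc_inj]
      · have hv : Mb b (last (m+1)) (last (m+1)) = 0 := by
          rw [hMb]
          simp only
          rw [Matrix.updateRow_self]
          exact Pi.single_eq_of_ne (Fin.castSucc_lt_last b).ne' 1
        rw [hv, Finset.sum_apply]
        refine Finset.sum_eq_zero fun a _ => ?_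
        rw [Pi.smul_apply, Pi.single_eq_of_ne (Fin.castSucc_lt_last a).ne' 1, smul_zero]
    conv_lhs => rw [← Matrix.updateCol_eq_self (Mb b) (last (m+1)), ← hcolval]
    rw [det_updateColumn_finsum]
    refine Finset.sum_congr rfl fun a _ => ?_
    rw [Matrix.det_updateCol_smul, hMab]
  -- step 3 : Laplace expansion of Mab along the last row
  have step3 : ∀ a b : Fin (m+1),
      (Mab a b).det = (-1 : R)^((m+1)+(b : ℕ))
        * ((Mab a b).submatrix castSucc ((castSucc b).succAbove)).det := by
    intro a b
    rw [Matrix.det_succ_row (Mab a b) (last (m+1))]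
    rw [Finset.sum_eq_single (castSucc b)]
    · have hentry : (Mab a b) (last (m+1)) (castSucc b) = 1 := by
        rw [hMab]
        simp only
        rw [Matrix.updateCol_ne (Fin.castSucc_lt_last b).ne, hMb]
        simp only
        rw [Matrix.updateRow_self, Pi.single_eq_same]
      rw [hentry, mul_one, Fin.val_last, Fin.coe_castSucc, Fin.succAbove_last]
    · intro j _ hj
      have hzero : (Mab a b) (last (m+1)) j = 0 := by
        rcases Fin.eq_castSucc_or_eq_last j with ⟨c, rfl⟩ | rfl
        · have hcb : castSucc c ≠ castSucc b := hj
          rw [hMab]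
          simp only
          rw [Matrix.updateCol_ne (Fin.castSucc_lt_last c).ne, hMb]
          simp only
          rw [Matrix.updateRow_self]
          exact Pi.single_eq_of_ne hcb 1
        · rw [hMab]
          simp only
          rw [Matrix.updateCol_self]
          exact Pi.single_eq_of_ne (Fin.castSucc_lt_last a).ne' 1
      rw [hzero, mul_zero, zero_mul]
    · intro h
      exact absurd (Finset.mem_univ _) h
  -- step 4 : Laplace expansion of the submatrix along the last column
  have step4 : ∀ a b : Fin (m+1),
      ((Mab a b).submatrix castSucc ((castSucc b).succAbove)).det
        = (-1 : R)^((a : ℕ)+m) * (K.submatrix a.succAbove b.succAbove).det := by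
    intro a b
    set B : Matrix (Fin (m+1)) (Fin (m+1)) R :=
      (Mab a b).submatrix castSucc ((castSucc b).succAbove) with hB
    have hlastcol : ∀ i : Fin (m+1),
        B i (last m) = (Pi.single a (1 : R) : Fin (m+1) → R) i := by
      intro i
      have hcol : (castSucc b).succAbove (last m) = last (m+1) := by
        rw [Fin.succAbove_castSucc_of_le b (last m) (Fin.le_last b), Fin.succ_last]
      rw [hB]
      simp only [Matrix.submatrix_apply]
      rw [hcol, hMab]
      simp only
      rw [Matrix.updateCol_self]
      simp [Pi.single_apply, Fin.castSucc_inj]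
    rw [Matrix.det_succ_column B (last m)]
    rw [Finset.sum_eq_single a]
    · rw [hlastcol a, Pi.single_eq_same, mul_one, Fin.val_last]
      congr 1
      congr 1
      ext i j
      rw [Matrix.submatrix_apply, Fin.succAbove_last, hB]
      simp only [Matrix.submatrix_apply]
      rw [Fin.castSucc_succAbove_castSucc, hMab]
      simp only
      rw [Matrix.updateCol_ne (Fin.castSucc_lt_last _).ne, hMb]
      simp only
      rw [Matrix.updateRow_ne (Fin.castSucc_lt_last _).ne, hAcc]
    · intro i _ hi
      rw [hlastcol i, Pi.single_eq_of_ne hi, mul_zero, zero_mul]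
    · intro h
      exact absurd (Finset.mem_univ _) h
  -- assemble
  rw [step1]
  refine Finset.sum_congr rfl fun b _ => ?_
  rw [step2 b]
  refine Finset.sum_congr rfl fun a _ => ?_
  rw [step3 a b, step4 a b, adjugate_eq_minor K b a, neg_one_pow_helper]
end Det

open ExteriorAlgebra

set_option maxHeartbeats 2000000 in
set_option synthInstance.maxHeartbeats 1000000 in
theorem grassmann_gaussian_with_sources (n : ℕ) (hn : 1 ≤ n)
    (K : Matrix (Fin n) (Fin n) ℝ) :
    let ψ : Fin n → ExteriorAlgebra ℝ (Fin (2 * n + 2) → ℝ) :=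
      fun i => ι ℝ (Pi.single (⟨i.val, by have := i.2; omega⟩ : Fin (2 * n + 2)) (1 : ℝ))
    let ψbar : Fin n → ExteriorAlgebra ℝ (Fin (2 * n + 2) → ℝ) :=
      fun i => ι ℝ (Pi.single (⟨n + i.val, by have := i.2; omega⟩ : Fin (2 * n + 2)) (1 : ℝ))
    let α : ExteriorAlgebra ℝ (Fin (2 * n + 2) → ℝ) :=
      ι ℝ (Pi.single (⟨2 * n, by omega⟩ : Fin (2 * n + 2)) (1 : ℝ))
    let β : ExteriorAlgebra ℝ (Fin (2 * n + 2) → ℝ) :=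
      ι ℝ (Pi.single (⟨2 * n + 1, by omega⟩ : Fin (2 * n + 2)) (1 : ℝ))
    let S : ExteriorAlgebra ℝ (Fin (2 * n + 2) → ℝ) :=
      (∑ i : Fin n, ∑ j : Fin n, K i j • (ψbar i * ψ j))
        - (∑ i : Fin n, α * ψ i) - ∑ i : Fin n, ψbar i * β
    let Ω : ExteriorAlgebra ℝ (Fin (2 * n + 2) → ℝ) :=
      ((List.finRange n).map fun i => ψbar i * ψ i).prod
    S ^ (n + 1)
      = -((((n + 1).factorial : ℝ) * ∑ a, ∑ b, K.adjugate a b) • (Ω * α * β)) := by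
  obtain ⟨m, rfl⟩ : ∃ m, n = m + 1 := ⟨n - 1, by omega⟩
  intro ψ ψbar α β S Ω
  set ξ : Fin (m+2) → (Fin (2 * (m+1) + 2) → ℝ) := fun i =>
    Fin.lastCases (-(Pi.single (⟨2 * (m+1), by omega⟩ : Fin (2 * (m+1) + 2)) (1 : ℝ)))
      (fun a => Pi.single (⟨m + 1 + a.val, by omega⟩ : Fin (2 * (m+1) + 2)) (1 : ℝ)) i with hξ
  set η : Fin (m+2) → (Fin (2 * (m+1) + 2) → ℝ) := fun j =>
    Fin.lastCases (Pi.single (⟨2 * (m+1) + 1, by omega⟩ : Fin (2 * (m+1) + 2)) (1 : ℝ))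
      (fun b => Pi.single (⟨b.val, by omega⟩ : Fin (2 * (m+1) + 2)) (1 : ℝ)) j with hη
  set z : Fin (m+2) → Fin (m+2) → ExteriorAlgebra ℝ (Fin (2 * (m+1) + 2) → ℝ) :=
    fun i j => ι ℝ (ξ i) * ι ℝ (η j) with hz
  -- identification with the statement's generators
  have hψb : ∀ a : Fin (m+1), ι ℝ (ξ (Fin.castSucc a)) = ψbar a := by
    intro a
    rw [hξ]
    simp only [Fin.lastCases_castSucc]
    rfl
  have hψ : ∀ b : Fin (m+1), ι ℝ (η (Fin.castSucc b)) = ψ b := by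
    intro b
    rw [hη]
    simp only [Fin.lastCases_castSucc]
    rfl
  have hξlast : ι ℝ (ξ (Fin.last (m+1))) = -α := by
    rw [hξ]
    simp only [Fin.lastCases_last, map_neg]
    rfl
  have hηlast : ι ℝ (η (Fin.last (m+1))) = β := by
    rw [hη]
    simp only [Fin.lastCases_last]
    rfl
  -- relations
  have hswapz : ∀ i j k l, z i j * z k l = -(z i l * z k j) := fun i j k l =>
    ext_swap4 (ξ i) (η j) (ξ k) (η l)
  have h1z : ∀ i j l, z i j * z i l = 0 := fun i j l => ext_zsq_left (ξ i) (η j) (η l)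
  have h2z : ∀ i j k, z i j * z k j = 0 := fun i j k => ext_zsq_right (ξ i) (ξ k) (η j)
  -- the commutative subalgebra
  set Sset : Set (ExteriorAlgebra ℝ (Fin (2 * (m+1) + 2) → ℝ)) :=
    Set.range (fun p : Fin (m+2) × Fin (m+2) => z p.1 p.2) with hSset
  have hcomm : ∀ x ∈ Sset, ∀ y ∈ Sset, x * y = y * x := by
    rintro x ⟨p, rfl⟩ y ⟨q, rfl⟩
    exact ext_comm4 (ξ p.1) (η p.2) (ξ q.1) (η q.2)
  letI : CommRing (Algebra.adjoin ℝ Sset) := Algebra.adjoinCommRingOfComm ℝ hcomm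
  set z' : Fin (m+2) → Fin (m+2) → (Algebra.adjoin ℝ Sset) :=
    fun i j => ⟨z i j, Algebra.subset_adjoin ⟨(i, j), rfl⟩⟩ with hz'
  set Kext : Matrix (Fin (m+2)) (Fin (m+2)) ℝ := Matrix.of fun i j : Fin (m+2) =>
    Fin.lastCases (Fin.lastCases (0 : ℝ) (fun _ => 1) j)
      (fun a => Fin.lastCases (-1 : ℝ) (fun b => K a b) j) i with hKext
  set M' : Matrix (Fin (m+2)) (Fin (m+2)) (Algebra.adjoin ℝ Sset) :=
    Kext.map (algebraMap ℝ _) with hM'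
  have hswap' : ∀ i j k l, z' i j * z' k l = -(z' i l * z' k j) := by
    intro i j k l
    apply Subtype.ext
    push_cast
    exact hswapz i j k l
  have h1' : ∀ i j l, z' i j * z' i l = 0 := by
    intro i j l
    apply Subtype.ext
    push_cast
    exact h1z i j l
  have h2' : ∀ i j k, z' i j * z' k j = 0 := by
    intro i j k
    apply Subtype.ext
    push_cast
    exact h2z i j k
  have hcore := core_pow z' M' hswap' h1' h2'
  have hval := congrArg (Subtype.val) hcore
  -- determinant of the border matrix
  have hdetKext : Kext.det = ∑ a, ∑ b, K.adjugate a b := by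
    rw [hKext]; exact det_border K
  have hMdet : M'.det = algebraMap ℝ (Algebra.adjoin ℝ Sset) Kext.det := by
    rw [hM']; exact ((algebraMap ℝ (Algebra.adjoin ℝ Sset)).map_det Kext).symm
  -- coercions
  have hvalL : (((∑ i, ∑ j, M' i j * z' i j) ^ (m+1+1) : Algebra.adjoin ℝ Sset) :
        ExteriorAlgebra ℝ (Fin (2 * (m+1) + 2) → ℝ))
      = (∑ i : Fin (m+2), ∑ j : Fin (m+2), Kext i j • z i j) ^ (m+1+1) := by
    rw [SubmonoidClass.coe_pow]
    congr 1
    rw [AddSubmonoidClass.coe_finset_sum]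
    refine Finset.sum_congr rfl fun i _ => ?_
    rw [AddSubmonoidClass.coe_finset_sum]
    refine Finset.sum_congr rfl fun j _ => ?_
    rw [MulMemClass.coe_mul, hM', Matrix.map_apply, Subalgebra.coe_algebraMap,
      ← Algebra.smul_def]
  have hprodcoe : ((∏ i, z' i i : Algebra.adjoin ℝ Sset) :
        ExteriorAlgebra ℝ (Fin (2 * (m+1) + 2) → ℝ))
      = (List.ofFn fun i : Fin (m+2) => z i i).prod := by
    rw [← List.prod_ofFn (f := fun i => z' i i), SubmonoidClass.coe_list_prod, List.map_ofFn]
    rfl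
  have hvalR : (((((m+1+1).factorial : Algebra.adjoin ℝ Sset)) * (M'.det * ∏ i, z' i i) :
        Algebra.adjoin ℝ Sset) : ExteriorAlgebra ℝ (Fin (2 * (m+1) + 2) → ℝ))
      = (((m+1+1).factorial : ℝ)) • ((∑ a, ∑ b, K.adjugate a b) •
          (List.ofFn fun i : Fin (m+2) => z i i).prod) := by
    rw [MulMemClass.coe_mul, MulMemClass.coe_mul, hprodcoe, hMdet, Subalgebra.coe_algebraMap,
      hdetKext]
    rw [Algebra.smul_def, Algebra.smul_def, map_natCast]
    push_cast
    ring_nf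
  -- building blocks of S and Omega
  have hzcc : ∀ a b : Fin (m+1), z (Fin.castSucc a) (Fin.castSucc b) = ψbar a * ψ b := by
    intro a b
    simp only [hz]
    rw [hψb, hψ]
  have hzcl : ∀ a : Fin (m+1), z (Fin.castSucc a) (Fin.last (m+1)) = ψbar a * β := by
    intro a
    simp only [hz]
    rw [hψb, hηlast]
  have hzlc : ∀ b : Fin (m+1), z (Fin.last (m+1)) (Fin.castSucc b) = -(α * ψ b) := by
    intro b
    simp only [hz]
    rw [hξlast, hψ, neg_mul]
  have hzll : z (Fin.last (m+1)) (Fin.last (m+1)) = -(α * β) := by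
    simp only [hz]
    rw [hξlast, hηlast, neg_mul]
  have hKcc : ∀ a b : Fin (m+1), Kext (Fin.castSucc a) (Fin.castSucc b) = K a b := by
    intro a b; simp [hKext]
  have hKcl : ∀ a : Fin (m+1), Kext (Fin.castSucc a) (Fin.last (m+1)) = -1 := by
    intro a; simp [hKext]
  have hKlc : ∀ b : Fin (m+1), Kext (Fin.last (m+1)) (Fin.castSucc b) = 1 := by
    intro b; simp [hKext]
  have hKll : Kext (Fin.last (m+1)) (Fin.last (m+1)) = 0 := by simp [hKext]
  have hSdef : S = (∑ i : Fin (m+1), ∑ j : Fin (m+1), K i j • (ψbar i * ψ j))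
      - (∑ i : Fin (m+1), α * ψ i) - ∑ i : Fin (m+1), ψbar i * β := rfl
  have hΩdef : Ω = ((List.finRange (m+1)).map fun i => ψbar i * ψ i).prod := rfl
  have hS : (∑ i : Fin (m+2), ∑ j : Fin (m+2), Kext i j • z i j) = S := by
    rw [Fin.sum_univ_castSucc (f := fun i : Fin (m+2) => ∑ j : Fin (m+2), Kext i j • z i j)]
    have hrow : ∀ a : Fin (m+1), (∑ j : Fin (m+2), Kext (Fin.castSucc a) j • z (Fin.castSucc a) j)
        = (∑ b : Fin (m+1), K a b • (ψbar a * ψ b)) - ψbar a * β := by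
      intro a
      rw [Fin.sum_univ_castSucc
        (f := fun j : Fin (m+2) => Kext (Fin.castSucc a) j • z (Fin.castSucc a) j)]
      rw [hKcl a, hzcl a, neg_one_smul, sub_eq_add_neg]
      congr 1
      refine Finset.sum_congr rfl fun b _ => ?_
      rw [hKcc, hzcc]
    have hlastrow : (∑ j : Fin (m+2), Kext (Fin.last (m+1)) j • z (Fin.last (m+1)) j)
        = -∑ b : Fin (m+1), α * ψ b := by
      rw [Fin.sum_univ_castSucc
        (f := fun j : Fin (m+2) => Kext (Fin.last (m+1)) j • z (Fin.last (m+1)) j)]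
      rw [hKll, zero_smul, add_zero, ← Finset.sum_neg_distrib]
      refine Finset.sum_congr rfl fun b _ => ?_
      rw [hKlc, hzlc, one_smul]
    rw [Finset.sum_congr rfl (fun a _ => hrow a), hlastrow, Finset.sum_sub_distrib, hSdef]
    abel
  have hP : (List.ofFn fun i : Fin (m+2) => z i i).prod = Ω * -(α * β) := by
    rw [List.ofFn_succ', List.prod_concat, hzll]
    congr 1
    rw [hΩdef, ← List.ofFn_eq_map]
    simp only [hzcc]
  have key : S ^ (m+1+1) = ((m+1+1).factorial : ℝ) •
      ((∑ a, ∑ b, K.adjugate a b) • (Ω * -(α * β))) := by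
    calc S ^ (m+1+1) = (∑ i : Fin (m+2), ∑ j : Fin (m+2), Kext i j • z i j) ^ (m+1+1) := by
          rw [hS]
      _ = (((∑ i, ∑ j, M' i j * z' i j) ^ (m+1+1) : Algebra.adjoin ℝ Sset) :
            ExteriorAlgebra ℝ (Fin (2 * (m+1) + 2) → ℝ)) := hvalL.symm
      _ = ((((m+1+1).factorial : Algebra.adjoin ℝ Sset) * (M'.det * ∏ i, z' i i) :
            Algebra.adjoin ℝ Sset) : ExteriorAlgebra ℝ (Fin (2 * (m+1) + 2) → ℝ)) := by
          rw [hcore]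
      _ = (((m+1+1).factorial : ℝ)) • ((∑ a, ∑ b, K.adjugate a b) •
            (List.ofFn fun i : Fin (m+2) => z i i).prod) := hvalR
      _ = ((m+1+1).factorial : ℝ) • ((∑ a, ∑ b, K.adjugate a b) • (Ω * -(α * β))) := by
          rw [hP]
  rw [key, mul_neg, ← mul_assoc, smul_neg, smul_neg, smul_smul]
end

section
/- Let τ be a symmetric g×g complex matrix such that τ − τ̄ is invertible (τ̄ the entrywise complex conjugate), and set B = −i(τ − τ̄)⁻¹. Let A be a symmetric real k×k matrix. Let V be a complex vector space and let α_i^r, β_i^r ∈ V for 1 ≤ i ≤ k, 1 ≤ r ≤ g be arbitrary vectors; in the exterior algebra Λ_ℂ(V) set ω_i^r = α_i^r + Σ_s τ_{rs} β_i^s and ω̄_i^r = α_i^r + Σ_s τ̄_{rs} β_i^s (images under the inclusion ι). Then Σ_{i,j} A_{ij} Σ_{r,s} B_{rs} (ω_i^r ∧ ω̄_j^s) = i · Σ_{i,j} A_{ij} Σ_r (α_i^r ∧ β_j^r), where i denotes the imaginary unit acting as a scalar of Λ_ℂ(V). -/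
private lemma sum_rot3 {M : Type*} [AddCommMonoid M] {ia ib ic : Type*}
    [Fintype ia] [Fintype ib] [Fintype ic] (f : ia → ib → ic → M) :
    ∑ a, ∑ b, ∑ c, f a b c = ∑ b, ∑ c, ∑ a, f a b c := by
  rw [Finset.sum_comm]
  exact Finset.sum_congr rfl fun b _ => Finset.sum_comm

private lemma sum_rot4 {M : Type*} [AddCommMonoid M] {ia ib ic id : Type*}
    [Fintype ia] [Fintype ib] [Fintype ic] [Fintype id] (f : ia → ib → ic → id → M) :
    ∑ a, ∑ b, ∑ c, ∑ d, f a b c d = ∑ c, ∑ d, ∑ a, ∑ b, f a b c d := by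
  calc ∑ a, ∑ b, ∑ c, ∑ d, f a b c d
      = ∑ a, ∑ c, ∑ d, ∑ b, f a b c d :=
        Finset.sum_congr rfl fun a _ => sum_rot3 (f a)
    _ = ∑ c, ∑ d, ∑ a, ∑ b, f a b c d := sum_rot3 (fun a c d => ∑ b, f a b c d)

private lemma sum_antisymm4 {k g : ℕ} {M : Type*} [AddCommGroup M] [Module ℂ M]
    (c : Fin k → Fin k → Fin g → Fin g → ℂ) (m : Fin k → Fin k → Fin g → Fin g → M)
    (hc : ∀ i j r s, c i j r s = c j i s r)
    (hm : ∀ i j r s, m i j r s = -(m j i s r)) :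
    ∑ i, ∑ j, ∑ r, ∑ s, c i j r s • m i j r s = 0 := by
  set S := ∑ i, ∑ j, ∑ r, ∑ s, c i j r s • m i j r s with hS
  have h : S = -S := by
    calc S = ∑ j, ∑ i, ∑ s, ∑ r, c i j r s • m i j r s := by
          rw [hS, Finset.sum_comm]
          exact Finset.sum_congr rfl fun j _ => Finset.sum_congr rfl fun i _ => Finset.sum_comm
      _ = ∑ j, ∑ i, ∑ s, ∑ r, c j i s r • (-(m j i s r)) := by
          refine Finset.sum_congr rfl fun j _ => Finset.sum_congr rfl fun i _ =>
            Finset.sum_congr rfl fun s _ => Finset.sum_congr rfl fun r _ => ?_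
          rw [hc i j r s, hm i j r s]
      _ = -S := by
          simp [hS, smul_neg, ← Finset.sum_neg_distrib]
  have h2 : (2 : ℂ) • S = 0 := by
    rw [two_smul]
    nth_rewrite 1 [h]
    simp
  have := congrArg (fun x => (2 : ℂ)⁻¹ • x) h2
  simpa [smul_smul] using this

private lemma key_s8 {k g : ℕ} (A : Matrix (Fin k) (Fin k) ℂ)
    (B τ τ' : Matrix (Fin g) (Fin g) ℂ)
    (hA : A.IsSymm) (hB : B.IsSymm) (hτ : τ.IsSymm)
    (hD : (τ * B * τ').IsSymm) (hcross : B * τ' - B * τ = Complex.I • 1)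
    {R : Type*} [Ring R] [Algebra ℂ R]
    (a b : Fin k → Fin g → R)
    (haa : ∀ i r j s, a i r * a j s = -(a j s * a i r))
    (hbb : ∀ i r j s, b i r * b j s = -(b j s * b i r))
    (hba : ∀ i r j s, b i r * a j s = -(a j s * b i r)) :
    ∑ i, ∑ j, A i j • ∑ r, ∑ s,
        B r s • ((a i r + ∑ t, τ r t • b i t) * (a j s + ∑ u, τ' s u • b j u))
      = Complex.I • ∑ i, ∑ j, A i j • ∑ r, a i r * b j r := by
  have inner : ∀ (i j : Fin k) (r s : Fin g),
      B r s • ((a i r + ∑ t, τ r t • b i t) * (a j s + ∑ u, τ' s u • b j u))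
      = B r s • (a i r * a j s)
      + ∑ u, (B r s * (τ' s u)) • (a i r * b j u)
      + ∑ t, (B r s * (τ r t)) • (b i t * a j s)
      + ∑ t, ∑ u, (B r s * (τ r t * τ' s u)) • (b i t * b j u) := by
    intro i j r s
    simp only [add_mul, mul_add, Finset.sum_mul, Finset.mul_sum, smul_mul_assoc, mul_smul_comm,
      Finset.smul_sum, smul_smul, smul_add, Finset.sum_add_distrib, mul_assoc]
    rw [show (∑ u, ∑ t, (B r s * (τ' s u * τ r t)) • (b i t * b j u))
        = ∑ t, ∑ u, (B r s * (τ r t * τ' s u)) • (b i t * b j u) from by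
      rw [Finset.sum_comm]
      exact Finset.sum_congr rfl fun t _ => Finset.sum_congr rfl fun u _ => by
        rw [mul_comm (τ' s u) (τ r t)]]
    abel
  have E1 : ∀ i j, A i j • (∑ r, ∑ s, B r s • (a i r * a j s))
      = ∑ r, ∑ s, (A i j * B r s) • (a i r * a j s) := by
    intro i j; simp only [Finset.smul_sum, smul_smul]
  have E2 : ∀ i j, A i j • (∑ r, ∑ s, ∑ u, (B r s * (τ' s u)) • (a i r * b j u))
      = ∑ r, ∑ u, (A i j * (B * τ') r u) • (a i r * b j u) := by
    intro i j
    simp only [Finset.smul_sum, smul_smul, Matrix.mul_apply, Finset.mul_sum, Finset.sum_smul]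
    exact Finset.sum_congr rfl fun r _ => Finset.sum_comm
  have E3 : ∀ i j, A i j • (∑ r, ∑ s, ∑ t, (B r s * (τ r t)) • (b i t * a j s))
      = ∑ s, ∑ t, (A i j * (B * τ) s t) • (b i t * a j s) := by
    intro i j
    simp only [Finset.smul_sum, smul_smul, Matrix.mul_apply, Finset.mul_sum, Finset.sum_smul]
    rw [sum_rot3 (fun r s t => (A i j * (B r s * τ r t)) • (b i t * a j s))]
    refine Finset.sum_congr rfl fun s _ => Finset.sum_congr rfl fun t _ =>
      Finset.sum_congr rfl fun r _ => ?_
    rw [hB.apply s r]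
  have E4 : ∀ i j, A i j • (∑ r, ∑ s, ∑ t, ∑ u, (B r s * (τ r t * τ' s u)) • (b i t * b j u))
      = ∑ t, ∑ u, (A i j * (τ * B * τ') t u) • (b i t * b j u) := by
    intro i j
    simp only [Finset.smul_sum, smul_smul, Matrix.mul_apply, Finset.mul_sum, Finset.sum_mul,
      Finset.sum_smul]
    rw [sum_rot4 (fun r s t u => (A i j * (B r s * (τ r t * τ' s u))) • (b i t * b j u))]
    refine Finset.sum_congr rfl fun t _ => Finset.sum_congr rfl fun u _ => ?_
    rw [Finset.sum_comm]
    refine Finset.sum_congr rfl fun r _ => Finset.sum_congr rfl fun s _ => ?_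
    refine congrArg (· • (b i t * b j u)) ?_
    rw [hτ.apply s t]; ring
  have step1 : ∀ i j, A i j • (∑ r, ∑ s,
      B r s • ((a i r + ∑ t, τ r t • b i t) * (a j s + ∑ u, τ' s u • b j u)))
      = (∑ r, ∑ s, (A i j * B r s) • (a i r * a j s))
      + (∑ r, ∑ u, (A i j * (B * τ') r u) • (a i r * b j u))
      + (∑ s, ∑ t, (A i j * (B * τ) s t) • (b i t * a j s))
      + (∑ t, ∑ u, (A i j * (τ * B * τ') t u) • (b i t * b j u)) := by
    intro i j
    rw [show (∑ r, ∑ s,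
        B r s • ((a i r + ∑ t, τ r t • b i t) * (a j s + ∑ u, τ' s u • b j u)))
      = (∑ r, ∑ s, B r s • (a i r * a j s))
      + (∑ r, ∑ s, ∑ u, (B r s * (τ' s u)) • (a i r * b j u))
      + (∑ r, ∑ s, ∑ t, (B r s * (τ r t)) • (b i t * a j s))
      + (∑ r, ∑ s, ∑ t, ∑ u, (B r s * (τ r t * τ' s u)) • (b i t * b j u)) from by
      simp only [← Finset.sum_add_distrib]
      exact Finset.sum_congr rfl fun r _ => Finset.sum_congr rfl fun s _ => inner i j r s]
    rw [smul_add, smul_add, smul_add, E1, E2, E3, E4]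
  have Z1 : (∑ i, ∑ j, ∑ r, ∑ s, (A i j * B r s) • (a i r * a j s)) = 0 :=
    sum_antisymm4 _ _ (fun i j r s => by rw [hA.apply i j, hB.apply r s])
      (fun i j r s => haa i r j s)
  have Z4 : (∑ i, ∑ j, ∑ t, ∑ u, (A i j * (τ * B * τ') t u) • (b i t * b j u)) = 0 :=
    sum_antisymm4 _ _ (fun i j t u => by rw [hA.apply i j, hD.apply t u])
      (fun i j t u => hbb i t j u)
  have Z3 : (∑ i, ∑ j, ∑ s, ∑ t, (A i j * (B * τ) s t) • (b i t * a j s))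
      = -(∑ i, ∑ j, ∑ r, ∑ t, (A i j * (B * τ) r t) • (a i r * b j t)) := by
    calc (∑ i, ∑ j, ∑ s, ∑ t, (A i j * (B * τ) s t) • (b i t * a j s))
        = ∑ i, ∑ j, ∑ s, ∑ t, -((A i j * (B * τ) s t) • (a j s * b i t)) := by
          refine Finset.sum_congr rfl fun i _ => Finset.sum_congr rfl fun j _ =>
            Finset.sum_congr rfl fun s _ => Finset.sum_congr rfl fun t _ => ?_
          rw [hba i t j s, smul_neg]
      _ = -(∑ i, ∑ j, ∑ s, ∑ t, (A i j * (B * τ) s t) • (a j s * b i t)) := by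
          simp only [← Finset.sum_neg_distrib]
      _ = -(∑ j, ∑ i, ∑ s, ∑ t, (A i j * (B * τ) s t) • (a j s * b i t)) := by
          rw [Finset.sum_comm]
      _ = -(∑ i, ∑ j, ∑ s, ∑ t, (A i j * (B * τ) s t) • (a i s * b j t)) := by
          refine congrArg Neg.neg (Finset.sum_congr rfl fun i _ => Finset.sum_congr rfl fun j _ =>
            Finset.sum_congr rfl fun s _ => Finset.sum_congr rfl fun t _ => ?_)
          rw [hA.apply i j]
  have Z23 : (∑ i, ∑ j, ∑ r, ∑ u, (A i j * (B * τ') r u) • (a i r * b j u))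
      - (∑ i, ∑ j, ∑ r, ∑ u, (A i j * (B * τ) r u) • (a i r * b j u))
      = Complex.I • ∑ i, ∑ j, A i j • ∑ r, a i r * b j r := by
    simp only [← Finset.sum_sub_distrib, ← sub_smul, ← mul_sub, ← Matrix.sub_apply, hcross]
    simp only [Matrix.smul_apply, Matrix.one_apply, smul_eq_mul, mul_ite, mul_one, mul_zero,
      ite_smul, zero_smul, Finset.sum_ite_eq, Finset.mem_univ, if_true]
    simp only [Finset.smul_sum, smul_smul]
    refine Finset.sum_congr rfl fun i _ => Finset.sum_congr rfl fun j _ =>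
      Finset.sum_congr rfl fun r _ => ?_
    rw [mul_comm]
  calc ∑ i, ∑ j, A i j • ∑ r, ∑ s,
        B r s • ((a i r + ∑ t, τ r t • b i t) * (a j s + ∑ u, τ' s u • b j u))
      = ∑ i, ∑ j, ((∑ r, ∑ s, (A i j * B r s) • (a i r * a j s))
        + (∑ r, ∑ u, (A i j * (B * τ') r u) • (a i r * b j u))
        + (∑ s, ∑ t, (A i j * (B * τ) s t) • (b i t * a j s))
        + (∑ t, ∑ u, (A i j * (τ * B * τ') t u) • (b i t * b j u))) :=
        Finset.sum_congr rfl fun i _ => Finset.sum_congr rfl fun j _ => step1 i j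
    _ = (∑ i, ∑ j, ∑ r, ∑ s, (A i j * B r s) • (a i r * a j s))
        + (∑ i, ∑ j, ∑ r, ∑ u, (A i j * (B * τ') r u) • (a i r * b j u))
        + (∑ i, ∑ j, ∑ s, ∑ t, (A i j * (B * τ) s t) • (b i t * a j s))
        + (∑ i, ∑ j, ∑ t, ∑ u, (A i j * (τ * B * τ') t u) • (b i t * b j u)) := by
          simp only [Finset.sum_add_distrib]
    _ = Complex.I • ∑ i, ∑ j, A i j • ∑ r, a i r * b j r := by
          rw [Z1, Z3, Z4, zero_add, add_zero, ← sub_eq_add_neg]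
          exact Z23

open ExteriorAlgebra

private lemma ianticomm {V : Type*} [AddCommGroup V] [Module ℂ V] (x y : V) :
    ι ℂ x * ι ℂ y = -(ι ℂ y * ι ℂ x) :=
  eq_neg_of_add_eq_zero_left (ι_add_mul_swap x y)

theorem nef_form_rewriting (g k : ℕ)
    (τ : Matrix (Fin g) (Fin g) ℂ) (hτ : τ.IsSymm)
    (hinv : IsUnit (τ - τ.map (starRingEnd ℂ)))
    (A : Matrix (Fin k) (Fin k) ℝ) (hA : A.IsSymm)
    (V : Type*) [AddCommGroup V] [Module ℂ V]
    (α β : Fin k → Fin g → V) :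
    let B : Matrix (Fin g) (Fin g) ℂ :=
      (-Complex.I) • (τ - τ.map (starRingEnd ℂ))⁻¹
    let ω : Fin k → Fin g → ExteriorAlgebra ℂ V :=
      fun i r => ι ℂ (α i r) + ∑ s, τ r s • ι ℂ (β i s)
    let ωbar : Fin k → Fin g → ExteriorAlgebra ℂ V :=
      fun i r => ι ℂ (α i r) + ∑ s, (starRingEnd ℂ) (τ r s) • ι ℂ (β i s)
    ∑ i, ∑ j, (A i j : ℂ) • ∑ r, ∑ s, B r s • (ω i r * ωbar j s)
      = Complex.I • ∑ i, ∑ j, (A i j : ℂ) • ∑ r, ι ℂ (α i r) * ι ℂ (β j r) := by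
  intro B ω ωbar
  set τ' : Matrix (Fin g) (Fin g) ℂ := τ.map (starRingEnd ℂ) with hτ'def
  have hdet : IsUnit (τ - τ').det := (Matrix.isUnit_iff_isUnit_det _).mp hinv
  have hMsymm : (τ - τ').IsSymm := hτ.sub (hτ.map _)
  have hBsymm : ((-Complex.I) • (τ - τ')⁻¹).IsSymm := by
    refine Matrix.IsSymm.smul ?_ _
    unfold Matrix.IsSymm
    rw [Matrix.transpose_nonsing_inv, hMsymm.eq]
  have hcross : ((-Complex.I) • (τ - τ')⁻¹) * τ' - ((-Complex.I) • (τ - τ')⁻¹) * τ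
      = Complex.I • 1 := by
    rw [← Matrix.mul_sub, ← neg_sub τ τ', Matrix.mul_neg, Matrix.smul_mul,
      Matrix.nonsing_inv_mul _ hdet]
    simp
  have hBM : ((-Complex.I) • (τ - τ')⁻¹) * τ'
      = ((-Complex.I) • (τ - τ')⁻¹) * τ + Complex.I • 1 := by
    have := hcross
    have h2 : ((-Complex.I) • (τ - τ')⁻¹) * τ'
        = ((-Complex.I) • (τ - τ')⁻¹) * τ
          + (((-Complex.I) • (τ - τ')⁻¹) * τ' - ((-Complex.I) • (τ - τ')⁻¹) * τ) := by abel
    rw [h2, this]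
  have hMB : τ' * ((-Complex.I) • (τ - τ')⁻¹)
      = τ * ((-Complex.I) • (τ - τ')⁻¹) + Complex.I • 1 := by
    have h0 : (τ - τ') * ((-Complex.I) • (τ - τ')⁻¹) = (-Complex.I) • 1 := by
      rw [Matrix.mul_smul, Matrix.mul_nonsing_inv _ hdet]
    rw [Matrix.sub_mul] at h0
    have h2 : τ' * ((-Complex.I) • (τ - τ')⁻¹)
        = τ * ((-Complex.I) • (τ - τ')⁻¹)
          - (τ * ((-Complex.I) • (τ - τ')⁻¹) - τ' * ((-Complex.I) • (τ - τ')⁻¹)) := by abel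
    rw [h2, h0]
    simp
  have hD : (τ * ((-Complex.I) • (τ - τ')⁻¹) * τ').IsSymm := by
    have h1 : τ * ((-Complex.I) • (τ - τ')⁻¹) * τ'
        = τ * ((-Complex.I) • (τ - τ')⁻¹) * τ + Complex.I • τ := by
      rw [Matrix.mul_assoc, hBM, Matrix.mul_add, Matrix.mul_smul, Matrix.mul_one,
        ← Matrix.mul_assoc]
    have h2 : τ' * ((-Complex.I) • (τ - τ')⁻¹) * τ
        = τ * ((-Complex.I) • (τ - τ')⁻¹) * τ + Complex.I • τ := by
      rw [hMB, Matrix.add_mul, Matrix.smul_mul, Matrix.one_mul]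
    unfold Matrix.IsSymm
    rw [Matrix.transpose_mul, Matrix.transpose_mul, hτ.eq, (hτ.map _).eq, hBsymm.eq,
      ← Matrix.mul_assoc, h2, h1]
  have hA' : (Matrix.of fun i j => ((A i j : ℝ) : ℂ)).IsSymm := by
    refine Matrix.IsSymm.ext fun i j => ?_
    simp [hA.apply i j]
  exact key_s8 (Matrix.of fun i j => ((A i j : ℝ) : ℂ)) _ τ τ' hA' hBsymm hτ hD hcross
    (fun i r => ι ℂ (α i r)) (fun i r => ι ℂ (β i r))
    (fun i r j s => ianticomm _ _) (fun i r j s => ianticomm _ _)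
    (fun i r j s => ianticomm _ _)
end
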